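/- arXiv:2307.14048 — 6 statements merged into one kernel-verified Lean document; each statement's English description precedes it below -/
import Mathlib

section
/- Let S = {x_i}_{i=1}^∞ and T = {y_i}_{i=1}^∞ be strictly increasing sequences of positive integers such that y_1 = m, m divides every y_i, and x_i ≥ y_i for all i. Then for every integer n ≥ 1, ρ(T; mn) ≥ ρ(S; mn). -/
/-- `rho S n` is the number of partitions of `n` all of whose parts belong to `S`. -/
noncomputable def rho (S : Set ℕ) (n : ℕ) : ℕ :=
  Nat.card {p : n.Partition // ∀ t ∈ p.parts, t ∈ S}

lemma sum_map_le_of_le (s : Multiset ℕ) (f : ℕ → ℕ) (h : ∀ t ∈ s, f t ≤ t) :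
    (s.map f).sum ≤ s.sum := by
  induction s using Multiset.induction with
  | empty => simp
  | cons a s ih =>
    simp only [Multiset.map_cons, Multiset.sum_cons]
    exact add_le_add (h a (Multiset.mem_cons_self a s))
      (ih fun t ht => h t (Multiset.mem_cons_of_mem ht))

theorem base_injection (m : ℕ) (x y : ℕ → ℕ)
    (hxmono : StrictMono x) (hymono : StrictMono y)
    (hxpos : ∀ i, 0 < x i) (hypos : ∀ i, 0 < y i)
    (hy1 : y 0 = m) (hdvd : ∀ i, m ∣ y i) (hxy : ∀ i, y i ≤ x i)
    (n : ℕ) (hn : 1 ≤ n) :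
    rho (Set.range x) (m * n) ≤ rho (Set.range y) (m * n) := by
  classical
  have hm : 0 < m := hy1 ▸ hypos 0
  set g : ℕ → ℕ := fun t => y (Function.invFun x t) with hg
  have hgx : ∀ i, g (x i) = y i := fun i => by
    simp [hg, Function.leftInverse_invFun hxmono.injective i]
  -- counting lemma
  have hcount : ∀ (s : Multiset ℕ), (∀ t ∈ s, t ∈ Set.range x) →
      ∀ i, (s.map g).count (y i) = s.count (x i) := by
    intro s hs i
    rw [Multiset.count_map, show s.count (x i) = Multiset.card (s.filter fun a => x i = a) by
      rw [← Multiset.countP_eq_card_filter]; rfl]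
    congr 1
    apply Multiset.filter_congr
    intro t ht
    obtain ⟨j, rfl⟩ := hs t ht
    rw [hgx j]
    constructor
    · intro h; exact congrArg x (hymono.injective h)
    · intro h; exact congrArg y (hxmono.injective h)
  -- the main construction facts
  have hsumle : ∀ (s : Multiset ℕ), (∀ t ∈ s, t ∈ Set.range x) →
      (s.map g).sum ≤ s.sum := by
    intro s hs
    apply sum_map_le_of_le
    intro t ht
    obtain ⟨j, rfl⟩ := hs t ht
    rw [hgx j]; exact hxy j
  have hdvds : ∀ (s : Multiset ℕ), (∀ t ∈ s, t ∈ Set.range x) →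
      m ∣ (s.map g).sum := by
    intro s hs
    apply Multiset.dvd_sum
    intro t ht
    obtain ⟨u, hu, rfl⟩ := Multiset.mem_map.1 ht
    obtain ⟨j, rfl⟩ := hs u hu
    rw [hgx j]; exact hdvd j
  -- define the injection
  have : Finite {p : (m*n).Partition // ∀ t ∈ p.parts, t ∈ Set.range y} :=
    Subtype.finite
  apply Nat.card_le_card_of_injective
    (f := fun p : {p : (m*n).Partition // ∀ t ∈ p.parts, t ∈ Set.range x} =>
      (⟨⟨p.1.parts.map g + Multiset.replicate ((m*n - (p.1.parts.map g).sum)/m) m, by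
        intro i hi
        rcases Multiset.mem_add.1 hi with hi | hi
        · obtain ⟨u, hu, rfl⟩ := Multiset.mem_map.1 hi
          obtain ⟨j, rfl⟩ := p.2 u hu
          rw [hgx j]; exact hypos j
        · rw [Multiset.eq_of_mem_replicate hi]; exact hm, by
        rw [Multiset.sum_add, Multiset.sum_replicate, smul_eq_mul]
        have h1 : (p.1.parts.map g).sum ≤ m * n := le_trans (hsumle _ p.2) (le_of_eq p.1.parts_sum)
        have h2 : m ∣ m * n - (p.1.parts.map g).sum :=
          Nat.dvd_sub (Dvd.intro n rfl) (hdvds _ p.2)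
        rw [Nat.div_mul_cancel h2]
        omega⟩, by
        intro t ht
        rcases Multiset.mem_add.1 ht with ht | ht
        · obtain ⟨u, hu, rfl⟩ := Multiset.mem_map.1 ht
          obtain ⟨j, rfl⟩ := p.2 u hu
          rw [hgx j]; exact ⟨j, rfl⟩
        · rw [Multiset.eq_of_mem_replicate ht]; exact ⟨0, hy1⟩⟩ :
        {p : (m*n).Partition // ∀ t ∈ p.parts, t ∈ Set.range y}))
  -- injectivity
  rintro ⟨p1, hp1⟩ ⟨p2, hp2⟩ heq
  simp only [Subtype.mk.injEq, Nat.Partition.mk.injEq] at heq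
  -- counts for i ≥ 1 agree
  have hcnt : ∀ i, i ≠ 0 → p1.parts.count (x i) = p2.parts.count (x i) := by
    intro i hi
    have hyi : y i ≠ m := by
      rw [← hy1]
      exact fun h => hi (hymono.injective h)
    have := congrArg (Multiset.count (y i)) heq
    have hne : ¬ m = y i := fun h => hyi h.symm
    simp only [Multiset.count_add, Multiset.count_replicate, if_neg hne,
      hcount _ hp1 i, hcount _ hp2 i, add_zero] at this
    exact this
  -- parts not equal to x 0 agree
  have hfilter : p1.parts.filter (fun t => ¬ t = x 0) = p2.parts.filter (fun t => ¬ t = x 0) := by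
    ext t
    rw [Multiset.count_filter, Multiset.count_filter]
    split
    · rename_i htne
      by_cases hr : t ∈ Set.range x
      · obtain ⟨j, rfl⟩ := hr
        have hj : j ≠ 0 := fun h => htne (by rw [h])
        exact hcnt j hj
      · rw [Multiset.count_eq_zero.2 (fun h => hr (hp1 t h)),
          Multiset.count_eq_zero.2 (fun h => hr (hp2 t h))]
    · rfl
  -- counts of x 0 agree by sum
  have hd1 := (Multiset.filter_add_not (fun t => t = x 0) p1.parts)
  have hd2 := (Multiset.filter_add_not (fun t => t = x 0) p2.parts)
  have hs1 := p1.parts_sum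
  have hs2 := p2.parts_sum
  rw [← hd1, Multiset.sum_add, Multiset.filter_eq', Multiset.sum_replicate] at hs1
  rw [← hd2, Multiset.sum_add, Multiset.filter_eq', Multiset.sum_replicate] at hs2
  rw [hfilter] at hs1
  have hc0 : p1.parts.count (x 0) = p2.parts.count (x 0) := by
    have hx0 := hxpos 0
    have := hs1.trans hs2.symm
    simp only [smul_eq_mul] at this
    have := Nat.add_right_cancel this
    exact Nat.eq_of_mul_eq_mul_right hx0 this
  have : p1.parts = p2.parts := by
    rw [← hd1, ← hd2, Multiset.filter_eq', Multiset.filter_eq', hc0, hfilter]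
  exact Subtype.ext (Nat.Partition.ext this)
end

section
/- Let a ≥ 1, d ≥ 1, and n ≥ d + 2a. Then q_d^{(a)}(n) ≥ q_{⌈d/a⌉}^{(1)}(⌈n/a⌉). -/
namespace ChangeLevelAux


def Fmap (a r : ℕ) (S : Finset ℕ) : Finset ℕ :=
  if r = 0 then S.image (a * ·)
  else if 1 ∈ S then
    if S.card = 2 then insert (a * (S.max.getD 0) - r) {a}
    else insert (a * (S.max.getD 0) + (a - r)) (((S.erase 1).erase (S.max.getD 0)).image (a * ·))
  else insert (a * (S.min.getD 0) - r) ((S.erase (S.min.getD 0)).image (a * ·))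

lemma mulInj {a : ℕ} (ha : 1 ≤ a) : Function.Injective (a * ·) := by
  intro x y h
  exact Nat.eq_of_mul_eq_mul_left ha h

lemma sum_image_mul {a : ℕ} (ha : 1 ≤ a) (S : Finset ℕ) :
    (S.image (a * ·)).sum id = a * S.sum id := by
  rw [Finset.sum_image (fun x _ y _ h => mulInj ha h)]
  simp only [id_eq]
  rw [Finset.mul_sum]

lemma special_not_mul {a r x y : ℕ} (hr : 1 ≤ r) (hra : r < a) (hy : 1 ≤ y) :
    a * x ≠ a * y - r := by
  intro h
  have h1 : a ≤ a * y := Nat.le_mul_of_pos_right a hy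
  have h2 : a * y = a * x + r := by omega
  rcases Nat.lt_or_ge x y with hxy | hxy
  · have h3 : a * (x + 1) ≤ a * y := Nat.mul_le_mul (le_refl a) hxy
    have h4 : a * (x + 1) = a * x + a := by rw [Nat.mul_succ]
    omega
  · have h3 : a * y ≤ a * x := Nat.mul_le_mul (le_refl a) hxy
    omega

lemma gap_mul {a D d x y : ℕ} (hdD : d ≤ a * D) (hg : D ≤ max x y - min x y) :
    d ≤ max (a * x) (a * y) - min (a * x) (a * y) := by
  rcases Nat.le_total x y with h | h
  · rw [Nat.max_eq_right h, Nat.min_eq_left h] at hg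
    have h1 : a * x + a * (y - x) = a * y := by rw [← Nat.mul_add]; congr 1; omega
    have h2 : a * D ≤ a * (y - x) := Nat.mul_le_mul (le_refl a) hg
    have h3 : a * x ≤ a * y := Nat.mul_le_mul (le_refl a) h
    rw [Nat.max_eq_right h3, Nat.min_eq_left h3]
    omega
  · rw [Nat.max_eq_left h, Nat.min_eq_right h] at hg
    have h1 : a * y + a * (x - y) = a * x := by rw [← Nat.mul_add]; congr 1; omega
    have h2 : a * D ≤ a * (x - y) := Nat.mul_le_mul (le_refl a) hg
    have h3 : a * y ≤ a * x := Nat.mul_le_mul (le_refl a) h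
    rw [Nat.max_eq_left h3, Nat.min_eq_right h3]
    omega

lemma min_spec {S : Finset ℕ} (h : S.Nonempty) :
    S.min.getD 0 ∈ S ∧ ∀ x ∈ S, S.min.getD 0 ≤ x := by
  obtain ⟨b, hb⟩ := S.min_of_nonempty h
  have hb' : S.min.getD 0 = b := by rw [hb]; rfl
  rw [hb']
  refine ⟨Finset.mem_of_min hb, fun x hx => ?_⟩
  have := Finset.min_le hx
  rw [hb] at this
  exact_mod_cast this

lemma max_spec {S : Finset ℕ} (h : S.Nonempty) :
    S.max.getD 0 ∈ S ∧ ∀ x ∈ S, x ≤ S.max.getD 0 := by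
  obtain ⟨b, hb⟩ := S.max_of_nonempty h
  have hb' : S.max.getD 0 = b := by rw [hb]; rfl
  rw [hb']
  refine ⟨Finset.mem_of_max hb, fun x hx => ?_⟩
  have := Finset.le_max hx
  rw [hb] at this
  exact_mod_cast this

lemma Fmap_props {a d D r m n : ℕ} (ha : 1 ≤ a) (hra : r < a) (hD : 1 ≤ D)
    (hdD : d ≤ a * D) (hmn : a * m = n + r) (hm : D + 2 ≤ m) (hn2 : d + 2 * a ≤ n)
    {S : Finset ℕ} (h1 : ∀ x ∈ S, 1 ≤ x)
    (h2 : ∀ x ∈ S, ∀ y ∈ S, x ≠ y → D ≤ max x y - min x y)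
    (h3 : S.sum id = m) :
    (∀ x ∈ Fmap a r S, a ≤ x) ∧
    (∀ x ∈ Fmap a r S, ∀ y ∈ Fmap a r S, x ≠ y → d ≤ max x y - min x y) ∧
    (Fmap a r S).sum id = n := by
  have hSne : S.Nonempty := by
    rcases S.eq_empty_or_nonempty with h | h
    · subst h; simp at h3; omega
    · exact h
  unfold Fmap
  split_ifs with hr0 h1S hc2
  -- Branch 1 : r = 0
  · refine ⟨?_, ?_, ?_⟩
    · intro x hx
      obtain ⟨y, hy, rfl⟩ := Finset.mem_image.mp hx
      exact Nat.le_mul_of_pos_right a (h1 y hy)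
    · intro x hx y hy hne
      obtain ⟨u, hu, rfl⟩ := Finset.mem_image.mp hx
      obtain ⟨v, hv, rfl⟩ := Finset.mem_image.mp hy
      exact gap_mul hdD (h2 u hu v hv (fun h => hne (by rw [h])))
    · rw [sum_image_mul ha, h3]; omega
  -- Branch 3 : r ≠ 0, 1 ∈ S, card = 2
  · have h1' : 1 ∈ S := h1S
    have hr1 : 1 ≤ r := by omega
    obtain ⟨u, v, huv, hSuv⟩ := Finset.card_eq_two.mp hc2
    have hEx : ∃ y, y ≠ 1 ∧ S = {1, y} := by
      subst hSuv
      rcases Finset.mem_insert.mp h1' with h | h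
      · exact ⟨v, fun hh => huv (h ▸ hh.symm ▸ rfl), by rw [← h]⟩
      · have h' : 1 = v := Finset.mem_singleton.mp h
        exact ⟨u, fun hh => huv (by rw [hh, ← h']), by rw [← h', Finset.pair_comm]⟩
    obtain ⟨y, hy1, hS⟩ := hEx
    subst hS
    rw [Finset.sum_pair (Ne.symm hy1)] at h3
    simp only [id_eq] at h3
    have hy2 : 2 ≤ y := by have := h1 y (by simp); omega
    have hmax : ({1, y} : Finset ℕ).max.getD 0 = y := by
      obtain ⟨hmem, hle⟩ := max_spec (S := {1, y}) ⟨1, by simp⟩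
      have h4 := hle y (by simp)
      rcases Finset.mem_insert.mp hmem with h5 | h5
      · omega
      · exact Finset.mem_singleton.mp h5
    rw [hmax]
    have hya : a * 2 ≤ a * y := Nat.mul_le_mul (le_refl a) hy2
    have ha2 : a * 2 = a + a := by ring
    have hane : a ≠ a * y - r := by
      have h6 := special_not_mul (x := 1) (y := y) hr1 hra (by omega)
      rwa [mul_one] at h6
    have hnotmem : (a * y - r) ∉ ({a} : Finset ℕ) := by
      rw [Finset.mem_singleton]
      exact fun h => hane h.symm
    have hym : a * (y + 1) = a * y + a := by rw [Nat.mul_succ]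
    have hym2 : a * (y + 1) = a * m := by rw [show y + 1 = m by omega]
    have keyq : d ≤ max (a * y - r) a - min (a * y - r) a := by
      have hlt : a ≤ a * y - r := by omega
      have hlt2 : a ≤ a * y - r := hlt
      rw [Nat.max_eq_left hlt, Nat.min_eq_right hlt]
      omega
    refine ⟨?_, ?_, ?_⟩
    · intro x hx
      rcases Finset.mem_insert.mp hx with rfl | hx
      · omega
      · rw [Finset.mem_singleton] at hx; omega
    · intro x hx y' hy' hne
      rcases Finset.mem_insert.mp hx with rfl | hx <;>
        rcases Finset.mem_insert.mp hy' with rfl | hy'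
      · exact absurd rfl hne
      · rw [Finset.mem_singleton] at hy'; subst hy'; exact keyq
      · rw [Finset.mem_singleton] at hx; subst hx
        rw [Nat.max_comm, Nat.min_comm]; exact keyq
      · rw [Finset.mem_singleton] at hx hy'; subst hx; subst hy'
        exact absurd rfl hne
    · rw [Finset.sum_insert hnotmem, Finset.sum_singleton, id_eq, id_eq]
      omega
  -- Branch 4 : r ≠ 0, 1 ∈ S, card ≠ 2
  · have h1' : 1 ∈ S := h1S
    have hr1 : 1 ≤ r := by omega
    obtain ⟨hmx_mem, hmx_ge⟩ := max_spec hSne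
    set mx := S.max.getD 0 with hmxdef
    have hcard3 : 3 ≤ S.card := by
      have hc0 : 0 < S.card := Finset.card_pos.mpr hSne
      have hc1 : S.card ≠ 1 := by
        intro h
        obtain ⟨x, hx⟩ := Finset.card_eq_one.mp h
        rw [hx] at h1' h3
        rw [Finset.mem_singleton] at h1'
        rw [Finset.sum_singleton] at h3
        simp only [id_eq] at h3
        omega
      omega
    have hmx2 : 2 ≤ mx := by
      obtain ⟨x, hx, y, hy, hxy⟩ := Finset.one_lt_card.mp (show 1 < S.card by omega)
      rcases eq_or_ne x 1 with rfl | hx1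
      · have h5 := hmx_ge y hy; have h6 := h1 y hy; omega
      · have h5 := hmx_ge x hx; have h6 := h1 x hx; omega
    have hmx_mem' : mx ∈ S.erase 1 := Finset.mem_erase.mpr ⟨by omega, hmx_mem⟩
    have hamx : a ≤ a * mx := Nat.le_mul_of_pos_right a (by omega)
    have hceq : a * mx + (a - r) = a * (mx + 1) - r := by
      have h6 : a * (mx + 1) = a * mx + a := by ring
      omega
    have hcQ : (a * mx + (a - r)) ∉ ((S.erase 1).erase mx).image (a * ·) := by
      intro hmem
      obtain ⟨x, hx, hx2⟩ := Finset.mem_image.mp hmem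
      rw [hceq] at hx2
      exact special_not_mul hr1 hra (by omega) hx2
    have hs1 : (S.erase 1).sum id + 1 = m := by
      rw [← h3]; exact Finset.sum_erase_add S id h1'
    have hs2 : ((S.erase 1).erase mx).sum id + mx = (S.erase 1).sum id :=
      Finset.sum_erase_add _ id hmx_mem'
    have key : ∀ v ∈ (S.erase 1).erase mx,
        d ≤ max (a * mx + (a - r)) (a * v) - min (a * mx + (a - r)) (a * v) := by
      intro v hv
      have hvne : v ≠ mx := (Finset.mem_erase.mp hv).1
      have hvS : v ∈ S := Finset.mem_of_mem_erase (Finset.mem_of_mem_erase hv)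
      have hlt : v < mx := lt_of_le_of_ne (hmx_ge v hvS) hvne
      have hg : D ≤ mx - v := by
        have h5 := h2 mx hmx_mem v hvS (Ne.symm hvne)
        rw [Nat.max_eq_left hlt.le, Nat.min_eq_right hlt.le] at h5
        exact h5
      have e1 : a * v + a * (mx - v) = a * mx := by rw [← Nat.mul_add]; congr 1; omega
      have e2 : a * D ≤ a * (mx - v) := Nat.mul_le_mul (le_refl a) hg
      have hle : a * v ≤ a * mx + (a - r) := by omega
      rw [Nat.max_eq_left hle, Nat.min_eq_right hle]
      omega
    refine ⟨?_, ?_, ?_⟩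
    · intro x hx
      rcases Finset.mem_insert.mp hx with rfl | hx
      · omega
      · obtain ⟨y, hy, rfl⟩ := Finset.mem_image.mp hx
        exact Nat.le_mul_of_pos_right a
          (h1 y (Finset.mem_of_mem_erase (Finset.mem_of_mem_erase hy)))
    · intro x hx y hy hne
      rcases Finset.mem_insert.mp hx with rfl | hx <;>
        rcases Finset.mem_insert.mp hy with rfl | hy
      · exact absurd rfl hne
      · obtain ⟨v, hv, rfl⟩ := Finset.mem_image.mp hy
        exact key v hv
      · obtain ⟨v, hv, rfl⟩ := Finset.mem_image.mp hx
        rw [Nat.max_comm, Nat.min_comm]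
        exact key v hv
      · obtain ⟨u, hu, rfl⟩ := Finset.mem_image.mp hx
        obtain ⟨v, hv, rfl⟩ := Finset.mem_image.mp hy
        exact gap_mul hdD (h2 u (Finset.mem_of_mem_erase (Finset.mem_of_mem_erase hu))
          v (Finset.mem_of_mem_erase (Finset.mem_of_mem_erase hv))
          (fun h => hne (by rw [h])))
    · rw [Finset.sum_insert hcQ, sum_image_mul ha, id_eq]
      set t := ((S.erase 1).erase mx).sum id with ht
      set s := (S.erase 1).sum id with hs
      have e1 : a * (t + mx) = a * t + a * mx := Nat.mul_add a t mx
      have e2 : a * (s + 1) = a * s + a := by rw [Nat.mul_add, Nat.mul_one]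
      have e5 : a * (t + mx) = a * s := by rw [hs2]
      have e6 : a * (s + 1) = a * m := by rw [hs1]
      omega

  -- Branch 2 : r ≠ 0, 1 ∉ S
  · obtain ⟨hmn_mem, hmn_le⟩ := min_spec hSne
    set mn := S.min.getD 0 with hmndef
    have hr1 : 1 ≤ r := by omega
    have hmn1 : mn ≠ 1 := fun h => h1S (h ▸ hmn_mem)
    have hmn2 : 2 ≤ mn := by have := h1 mn hmn_mem; omega
    have hamn : a * 2 ≤ a * mn := Nat.mul_le_mul (le_refl a) hmn2
    have ha2 : a * 2 = a + a := by ring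
    have hcP : (a * mn - r) ∉ (S.erase mn).image (a * ·) := by
      intro hmem
      obtain ⟨x, hx, hx2⟩ := Finset.mem_image.mp hmem
      exact special_not_mul hr1 hra (by omega) hx2
    have hsum_er : (S.erase mn).sum id + mn = m := by
      rw [← h3]; exact Finset.sum_erase_add S id hmn_mem
    have key : ∀ v ∈ S.erase mn,
        d ≤ max (a * mn - r) (a * v) - min (a * mn - r) (a * v) := by
      intro v hv
      obtain ⟨hvne, hvS⟩ := Finset.mem_erase.mp hv
      have hlt : mn < v := lt_of_le_of_ne (hmn_le v hvS) (Ne.symm hvne)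
      have hg : D ≤ v - mn := by
        have h5 := h2 v hvS mn hmn_mem hvne
        rw [Nat.max_eq_left hlt.le, Nat.min_eq_right hlt.le] at h5
        exact h5
      have e1 : a * mn + a * (v - mn) = a * v := by rw [← Nat.mul_add]; congr 1; omega
      have e2 : a * D ≤ a * (v - mn) := Nat.mul_le_mul (le_refl a) hg
      have hle : a * mn - r ≤ a * v := by omega
      rw [Nat.max_eq_right hle, Nat.min_eq_left hle]
      omega
    refine ⟨?_, ?_, ?_⟩
    · intro x hx
      rcases Finset.mem_insert.mp hx with rfl | hx
      · omega
      · obtain ⟨y, hy, rfl⟩ := Finset.mem_image.mp hx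
        exact Nat.le_mul_of_pos_right a (h1 y (Finset.mem_of_mem_erase hy))
    · intro x hx y hy hne
      rcases Finset.mem_insert.mp hx with rfl | hx <;>
        rcases Finset.mem_insert.mp hy with rfl | hy
      · exact absurd rfl hne
      · obtain ⟨v, hv, rfl⟩ := Finset.mem_image.mp hy
        exact key v hv
      · obtain ⟨v, hv, rfl⟩ := Finset.mem_image.mp hx
        rw [Nat.max_comm, Nat.min_comm]
        exact key v hv
      · obtain ⟨u, hu, rfl⟩ := Finset.mem_image.mp hx
        obtain ⟨v, hv, rfl⟩ := Finset.mem_image.mp hy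
        exact gap_mul hdD (h2 u (Finset.mem_of_mem_erase hu) v (Finset.mem_of_mem_erase hv)
          (fun h => hne (by rw [h])))
    · rw [Finset.sum_insert hcP, sum_image_mul ha, id_eq]
      set t := (S.erase mn).sum id with ht
      have e1 : a * (t + mn) = a * t + a * mn := Nat.mul_add a t mn
      have e5 : a * (t + mn) = a * m := by rw [hsum_er]
      omega

lemma max_ge_two {T : Finset ℕ} (hT1 : ∀ x ∈ T, 1 ≤ x) (h1 : 1 ∈ T) (hc : 2 ≤ T.card) :
    2 ≤ T.max.getD 0 := by
  have hne : T.Nonempty := ⟨1, h1⟩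
  obtain ⟨hmem, hge⟩ := max_spec hne
  obtain ⟨x, hx, y, hy, hxy⟩ := Finset.one_lt_card.mp (show 1 < T.card by omega)
  rcases eq_or_ne x 1 with rfl | hx1
  · have h5 := hge y hy; have h6 := hT1 y hy; omega
  · have h5 := hge x hx; have h6 := hT1 x hx; omega

lemma card3 {S : Finset ℕ} {m : ℕ} (h1 : 1 ∈ S) (h3 : S.sum id = m) (hm : 3 ≤ m)
    (hc : S.card ≠ 2) : 3 ≤ S.card := by
  have hc0 : 0 < S.card := Finset.card_pos.mpr ⟨1, h1⟩
  have hc1 : S.card ≠ 1 := by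
    intro h
    obtain ⟨x, hx⟩ := Finset.card_eq_one.mp h
    rw [hx] at h1 h3
    rw [Finset.mem_singleton] at h1
    rw [Finset.sum_singleton] at h3
    simp only [id_eq] at h3
    omega
  omega

lemma b3_shape {S : Finset ℕ} {m : ℕ} (h1 : 1 ∈ S) (h3 : S.sum id = m) (hm : 3 ≤ m)
    (hc : S.card = 2) : S = {1, m - 1} := by
  obtain ⟨u, v, huv, rfl⟩ := Finset.card_eq_two.mp hc
  rw [Finset.sum_pair huv] at h3
  simp only [id_eq] at h3
  rcases Finset.mem_insert.mp h1 with h | h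
  · rw [← h]
    rw [← h] at h3
    congr 1
    rw [Finset.singleton_inj]
    omega
  · rw [Finset.mem_singleton] at h
    rw [← h, Finset.pair_comm]
    rw [← h] at h3
    congr 1
    rw [Finset.singleton_inj]
    omega

/-- `a` is not a member of a branch-2 image. -/
lemma not_mem_b2 {a r : ℕ} {S : Finset ℕ} (ha : 1 ≤ a) (hr1 : 1 ≤ r) (hra : r < a)
    (hS1 : ∀ x ∈ S, 1 ≤ x) (hs : 1 ∉ S) (hne : S.Nonempty) :
    a ∉ insert (a * (S.min.getD 0) - r) ((S.erase (S.min.getD 0)).image (a * ·)) := by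
  intro h
  rcases Finset.mem_insert.mp h with h | h
  · have hmem := (min_spec hne).1
    have h2 := special_not_mul (x := 1) (y := S.min.getD 0) hr1 hra (hS1 _ hmem)
    rw [mul_one] at h2
    exact h2 h
  · obtain ⟨x, hx, hx2⟩ := Finset.mem_image.mp h
    have hx1 : x = 1 := mulInj ha (show a * x = a * 1 by rw [hx2, mul_one])
    exact hs (hx1 ▸ Finset.mem_of_mem_erase hx)

/-- `a` is not a member of a branch-4 image. -/
lemma not_mem_b4 {a r : ℕ} {T : Finset ℕ} (ha : 1 ≤ a) (hr1 : 1 ≤ r) (hra : r < a)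
    (hT1 : ∀ x ∈ T, 1 ≤ x) (ht : 1 ∈ T) :
    a ∉ insert (a * (T.max.getD 0) + (a - r))
      (((T.erase 1).erase (T.max.getD 0)).image (a * ·)) := by
  intro h
  rcases Finset.mem_insert.mp h with h | h
  · have hmx1 : 1 ≤ T.max.getD 0 := (max_spec ⟨1, ht⟩).2 1 ht
    have h4 : a ≤ a * T.max.getD 0 := Nat.le_mul_of_pos_right a hmx1
    omega
  · obtain ⟨x, hx, hx2⟩ := Finset.mem_image.mp h
    have hx1 : x = 1 := mulInj ha (show a * x = a * 1 by rw [hx2, mul_one])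
    exact (Finset.mem_erase.mp (Finset.mem_of_mem_erase hx)).1 (hx1 ▸ rfl)

lemma b2_b4_false {a r : ℕ} {S T : Finset ℕ} (ha : 1 ≤ a) (hr1 : 1 ≤ r) (hra : r < a)
    (hS1 : ∀ x ∈ S, 1 ≤ x) (hsne : S.Nonempty) (hs : 1 ∉ S)
    (hT1 : ∀ x ∈ T, 1 ≤ x) (ht : 1 ∈ T) (htc3 : 3 ≤ T.card)
    (heq : insert (a * (S.min.getD 0) - r) ((S.erase (S.min.getD 0)).image (a * ·)) =
      insert (a * (T.max.getD 0) + (a - r))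
        (((T.erase 1).erase (T.max.getD 0)).image (a * ·))) : False := by
  obtain ⟨hmn_mem, hmn_le⟩ := min_spec hsne
  set mn := S.min.getD 0 with hmndef
  obtain ⟨hmx_mem, hmx_ge⟩ := max_spec (⟨1, ht⟩ : T.Nonempty)
  set mx := T.max.getD 0 with hmxdef
  have hmn1 : 1 ≤ mn := hS1 _ hmn_mem
  have hmx1 : 1 ≤ mx := hT1 _ hmx_mem
  have hamn : a ≤ a * mn := Nat.le_mul_of_pos_right a hmn1
  have hamx1 : a ≤ a * (mx + 1) := Nat.le_mul_of_pos_right a (by omega)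
  have hdistr : a * (mx + 1) = a * mx + a := by ring
  -- the special element of the LHS is in the RHS
  have hmem : (a * mn - r) ∈ insert (a * mx + (a - r))
      (((T.erase 1).erase mx).image (a * ·)) := by
    rw [← heq]; exact Finset.mem_insert_self _ _
  have hmn_eq : mn = mx + 1 := by
    rcases Finset.mem_insert.mp hmem with h | h
    · have : a * mn = a * (mx + 1) := by omega
      have := mulInj ha (show a * mn = a * (mx + 1) from this)
      omega
    · obtain ⟨x, hx, hx2⟩ := Finset.mem_image.mp h
      have hx1 : 1 ≤ x := hT1 _ (Finset.mem_of_mem_erase (Finset.mem_of_mem_erase hx))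
      exact absurd hx2 (special_not_mul hr1 hra hmn1)
  -- pick an element of the doubly-erased T
  have hmx2 : 2 ≤ mx := max_ge_two hT1 ht (by omega)
  have hmxe : mx ∈ T.erase 1 := Finset.mem_erase.mpr ⟨by omega, hmx_mem⟩
  have hcard : 1 ≤ ((T.erase 1).erase mx).card := by
    rw [Finset.card_erase_of_mem hmxe, Finset.card_erase_of_mem ht]
    omega
  obtain ⟨v, hv⟩ := Finset.card_pos.mp (show 0 < ((T.erase 1).erase mx).card by omega)
  have hvT : v ∈ T := Finset.mem_of_mem_erase (Finset.mem_of_mem_erase hv)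
  have hv1 : 1 ≤ v := hT1 _ hvT
  have hvmem : a * v ∈ insert (a * mn - r) ((S.erase mn).image (a * ·)) := by
    rw [heq]
    exact Finset.mem_insert_of_mem (Finset.mem_image_of_mem _ hv)
  rcases Finset.mem_insert.mp hvmem with h | h
  · exact absurd h (special_not_mul hr1 hra hmn1)
  · obtain ⟨u, hu, hu2⟩ := Finset.mem_image.mp h
    have huv : u = v := mulInj ha hu2
    subst huv
    have h5 : mn ≤ u := hmn_le u (Finset.mem_of_mem_erase hu)
    have h6 : u ≤ mx := hmx_ge u hvT
    omega

lemma Fmap_inj {a r m : ℕ} (ha : 1 ≤ a) (hra : r < a) (hm : 3 ≤ m)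
    {S T : Finset ℕ}
    (hS1 : ∀ x ∈ S, 1 ≤ x) (hS3 : S.sum id = m)
    (hT1 : ∀ x ∈ T, 1 ≤ x) (hT3 : T.sum id = m)
    (heq : Fmap a r S = Fmap a r T) : S = T := by
  have hSne : S.Nonempty := by
    rcases S.eq_empty_or_nonempty with h | h
    · subst h; simp at hS3; omega
    · exact h
  have hTne : T.Nonempty := by
    rcases T.eq_empty_or_nonempty with h | h
    · subst h; simp at hT3; omega
    · exact h
  by_cases hr0 : r = 0
  · simp only [Fmap, if_pos hr0] at heq
    exact Finset.image_injective (mulInj ha) heq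
  have hr1 : 1 ≤ r := by omega
  by_cases hs : 1 ∈ S <;> by_cases ht : 1 ∈ T
  · -- both contain 1
    by_cases hsc : S.card = 2 <;> by_cases htc : T.card = 2
    · rw [b3_shape hs hS3 hm hsc, b3_shape ht hT3 hm htc]
    · -- S branch 3, T branch 4 : contradiction
      exfalso
      simp only [Fmap, if_neg hr0, if_pos hs, if_pos ht, if_pos hsc, if_neg htc] at heq
      have hA : a ∈ insert (a * (S.max.getD 0) - r) ({a} : Finset ℕ) :=
        Finset.mem_insert_of_mem (Finset.mem_singleton_self a)
      rw [heq] at hA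
      exact not_mem_b4 ha hr1 hra hT1 ht hA
    · exfalso
      simp only [Fmap, if_neg hr0, if_pos hs, if_pos ht, if_neg hsc, if_pos htc] at heq
      have hA : a ∈ insert (a * (T.max.getD 0) - r) ({a} : Finset ℕ) :=
        Finset.mem_insert_of_mem (Finset.mem_singleton_self a)
      rw [← heq] at hA
      exact not_mem_b4 ha hr1 hra hS1 hs hA
    · -- branch 4 on both sides
      simp only [Fmap, if_neg hr0, if_pos hs, if_pos ht, if_neg hsc, if_neg htc] at heq
      have hsc3 := card3 hs hS3 hm hsc
      have htc3 := card3 ht hT3 hm htc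
      obtain ⟨hmxS_mem, hmxS_ge⟩ := max_spec hSne
      obtain ⟨hmxT_mem, hmxT_ge⟩ := max_spec hTne
      set mxS := S.max.getD 0 with hmxSd
      set mxT := T.max.getD 0 with hmxTd
      have hmxS2 : 2 ≤ mxS := max_ge_two hS1 hs (by omega)
      have hmxT2 : 2 ≤ mxT := max_ge_two hT1 ht (by omega)
      have hdS : a * (mxS + 1) = a * mxS + a := by ring
      have hdT : a * (mxT + 1) = a * mxT + a := by ring
      have hcS : a * mxS + (a - r) = a * (mxS + 1) - r := by omega
      have hcT : a * mxT + (a - r) = a * (mxT + 1) - r := by omega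
      have hspecS : (a * mxS + (a - r)) ∉ ((S.erase 1).erase mxS).image (a * ·) := by
        intro hmem
        obtain ⟨x, hx, hx2⟩ := Finset.mem_image.mp hmem
        rw [hcS] at hx2
        exact special_not_mul hr1 hra (by omega) hx2
      have hspecT : (a * mxT + (a - r)) ∉ ((T.erase 1).erase mxT).image (a * ·) := by
        intro hmem
        obtain ⟨x, hx, hx2⟩ := Finset.mem_image.mp hmem
        rw [hcT] at hx2
        exact special_not_mul hr1 hra (by omega) hx2
      have hmem : (a * mxS + (a - r)) ∈ insert (a * mxT + (a - r))
          (((T.erase 1).erase mxT).image (a * ·)) := by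
        rw [← heq]; exact Finset.mem_insert_self _ _
      have hmx_eq : mxS = mxT := by
        rcases Finset.mem_insert.mp hmem with h | h
        · have h7 : a * (mxS + 1) = a * (mxT + 1) := by omega
          have h8 := mulInj ha h7
          omega
        · obtain ⟨x, hx, hx2⟩ := Finset.mem_image.mp h
          rw [hcS] at hx2
          exact absurd hx2 (special_not_mul hr1 hra (by omega))
      rw [hmx_eq] at heq hspecS hmxS_mem
      have hQ : ((S.erase 1).erase mxT).image (a * ·) =
          ((T.erase 1).erase mxT).image (a * ·) := by
        have h8 := congrArg (fun s => s.erase (a * mxT + (a - r))) heq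
        simpa [Finset.erase_insert hspecS, Finset.erase_insert hspecT] using h8
      have hQ2 : (S.erase 1).erase mxT = (T.erase 1).erase mxT :=
        Finset.image_injective (mulInj ha) hQ
      have hS' : S.erase 1 = T.erase 1 := by
        have h9 := congrArg (insert mxT) hQ2
        rwa [Finset.insert_erase (Finset.mem_erase.mpr ⟨by omega, hmxS_mem⟩),
             Finset.insert_erase (Finset.mem_erase.mpr ⟨by omega, hmxT_mem⟩)] at h9
      have h10 := congrArg (insert 1) hS'
      rwa [Finset.insert_erase hs, Finset.insert_erase ht] at h10
  · -- 1 ∈ S, 1 ∉ T : contradiction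
    exfalso
    by_cases hsc : S.card = 2
    · simp only [Fmap, if_neg hr0, if_pos hs, if_neg ht, if_pos hsc] at heq
      have hA : a ∈ insert (a * (S.max.getD 0) - r) ({a} : Finset ℕ) :=
        Finset.mem_insert_of_mem (Finset.mem_singleton_self a)
      rw [heq] at hA
      exact not_mem_b2 ha hr1 hra hT1 ht hTne hA
    · simp only [Fmap, if_neg hr0, if_pos hs, if_neg ht, if_neg hsc] at heq
      exact b2_b4_false ha hr1 hra hT1 hTne ht hS1 hs (card3 hs hS3 hm hsc) heq.symm
  · -- 1 ∉ S, 1 ∈ T : contradiction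
    exfalso
    by_cases htc : T.card = 2
    · simp only [Fmap, if_neg hr0, if_neg hs, if_pos ht, if_pos htc] at heq
      have hA : a ∈ insert (a * (T.max.getD 0) - r) ({a} : Finset ℕ) :=
        Finset.mem_insert_of_mem (Finset.mem_singleton_self a)
      rw [← heq] at hA
      exact not_mem_b2 ha hr1 hra hS1 hs hSne hA
    · simp only [Fmap, if_neg hr0, if_neg hs, if_pos ht, if_neg htc] at heq
      exact b2_b4_false ha hr1 hra hS1 hSne hs hT1 ht (card3 ht hT3 hm htc) heq
  · -- 1 ∉ S, 1 ∉ T : branch 2 on both sides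
    simp only [Fmap, if_neg hr0, if_neg hs, if_neg ht] at heq
    obtain ⟨hmnS_mem, hmnS_le⟩ := min_spec hSne
    obtain ⟨hmnT_mem, hmnT_le⟩ := min_spec hTne
    set mnS := S.min.getD 0 with hmnSd
    set mnT := T.min.getD 0 with hmnTd
    have hS1' : 1 ≤ mnS := hS1 _ hmnS_mem
    have hT1' : 1 ≤ mnT := hT1 _ hmnT_mem
    have haS : a ≤ a * mnS := Nat.le_mul_of_pos_right a hS1'
    have haT : a ≤ a * mnT := Nat.le_mul_of_pos_right a hT1'
    have hspecS : (a * mnS - r) ∉ (S.erase mnS).image (a * ·) := by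
      intro hmem; obtain ⟨x, hx, hx2⟩ := Finset.mem_image.mp hmem
      exact special_not_mul hr1 hra hS1' hx2
    have hspecT : (a * mnT - r) ∉ (T.erase mnT).image (a * ·) := by
      intro hmem; obtain ⟨x, hx, hx2⟩ := Finset.mem_image.mp hmem
      exact special_not_mul hr1 hra hT1' hx2
    have hmem : (a * mnS - r) ∈ insert (a * mnT - r) ((T.erase mnT).image (a * ·)) := by
      rw [← heq]; exact Finset.mem_insert_self _ _
    have hmn_eq : mnS = mnT := by
      rcases Finset.mem_insert.mp hmem with h | h
      · have h7 : a * mnS = a * mnT := by omega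
        exact mulInj ha h7
      · obtain ⟨x, hx, hx2⟩ := Finset.mem_image.mp h
        exact absurd hx2 (special_not_mul hr1 hra hS1')
    rw [hmn_eq] at heq hspecS hmnS_mem
    have hP : (S.erase mnT).image (a * ·) = (T.erase mnT).image (a * ·) := by
      have h8 := congrArg (fun s => s.erase (a * mnT - r)) heq
      simpa [Finset.erase_insert hspecS, Finset.erase_insert hspecT] using h8
    have hP2 : S.erase mnT = T.erase mnT := Finset.image_injective (mulInj ha) hP
    have h9 := congrArg (insert mnT) hP2
    rwa [Finset.insert_erase hmnS_mem, Finset.insert_erase hmnT_mem] at h9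


lemma parts_facts {D m : ℕ} (hD1 : 1 ≤ D) (p : m.Partition)
    (hp2 : p.parts.Pairwise (fun x y => D ≤ max x y - min x y)) :
    p.parts.toFinset.val = p.parts ∧
    (∀ x ∈ p.parts.toFinset, 1 ≤ x) ∧
    (∀ x ∈ p.parts.toFinset, ∀ y ∈ p.parts.toFinset, x ≠ y → D ≤ max x y - min x y) ∧
    p.parts.toFinset.sum id = m := by
  have hnodup : p.parts.Nodup := by
    rw [Multiset.nodup_iff_pairwise]
    obtain ⟨l, hl, hp⟩ := hp2
    refine ⟨l, hl, hp.imp ?_⟩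
    intro x y h he
    subst he
    rw [Nat.max_self, Nat.min_self] at h
    omega
  have hval : p.parts.toFinset.val = p.parts := by
    rw [Multiset.toFinset_val]
    exact Multiset.dedup_eq_self.mpr hnodup
  have hsymm : Symmetric (fun x y : ℕ => D ≤ max x y - min x y) := by
    intro x y h
    rwa [Nat.max_comm, Nat.min_comm] at h
  refine ⟨hval, ?_, ?_, ?_⟩
  · intro x hx
    exact p.parts_pos (Multiset.mem_toFinset.mp hx)
  · intro x hx y hy hxy
    haveI : Std.Symm (fun x y : ℕ => D ≤ max x y - min x y) := ⟨fun a b h => hsymm h⟩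
    exact hp2.forall (Multiset.mem_toFinset.mp hx) (Multiset.mem_toFinset.mp hy) hxy
  · rw [← Finset.sum_val, hval, p.parts_sum]

end ChangeLevelAux

/-- `qNum a d n` is the number of partitions of `n` into parts each at least `a`
in which any two parts differ by at least `d`. -/
noncomputable def qNum (a d n : ℕ) : ℕ :=
  Nat.card {p : n.Partition //
    (∀ x ∈ p.parts, a ≤ x) ∧
    p.parts.Pairwise (fun x y => d ≤ max x y - min x y)}

theorem change_level (a d n : ℕ) (ha : 1 ≤ a) (hd : 1 ≤ d) (hn : d + 2 * a ≤ n) :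
    qNum 1 ((d + a - 1) / a) ((n + a - 1) / a) ≤ qNum a d n := by
  open ChangeLevelAux in
  set D := (d + a - 1) / a with hDdef
  set m := (n + a - 1) / a with hmdef
  have hda := Nat.div_add_mod (d + a - 1) a
  rw [← hDdef] at hda
  have hdm : (d + a - 1) % a < a := Nat.mod_lt _ (by omega)
  have hdD : d ≤ a * D := by omega
  have hD1 : 1 ≤ D := by
    rcases Nat.eq_zero_or_pos D with h | h
    · rw [h, Nat.mul_zero] at hdD; omega
    · exact h
  have hna := Nat.div_add_mod (n + a - 1) a
  rw [← hmdef] at hna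
  have hnm : (n + a - 1) % a < a := Nat.mod_lt _ (by omega)
  set r := a * m - n with hrdef
  have hmn : a * m = n + r := by omega
  have hra : r < a := by omega
  have hm2 : D + 2 ≤ m := by
    have h1 : d + a - 1 + a + a ≤ n + a - 1 := by omega
    have h2 : (d + a - 1 + a + a) / a = D + 2 := by
      rw [Nat.add_div_right _ (by omega), Nat.add_div_right _ (by omega)]
    have h3 := Nat.div_le_div_right (c := a) h1
    omega
  have hall : ∀ pp : {p : m.Partition // (∀ x ∈ p.parts, 1 ≤ x) ∧
      p.parts.Pairwise (fun x y => D ≤ max x y - min x y)},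
      (∀ x ∈ Fmap a r pp.1.parts.toFinset, a ≤ x) ∧
      (∀ x ∈ Fmap a r pp.1.parts.toFinset, ∀ y ∈ Fmap a r pp.1.parts.toFinset,
        x ≠ y → d ≤ max x y - min x y) ∧
      (Fmap a r pp.1.parts.toFinset).sum id = n := by
    intro pp
    obtain ⟨hval, hf1, hf2, hf3⟩ := parts_facts hD1 pp.1 pp.2.2
    exact Fmap_props ha hra hD1 hdD hmn hm2 hn hf1 hf2 hf3
  rw [qNum, qNum]
  apply Nat.card_le_card_of_injective
    (fun pp => (⟨⟨(Fmap a r pp.1.parts.toFinset).val,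
      fun {i} hi => Nat.lt_of_lt_of_le ha ((hall pp).1 i (Finset.mem_val.mp hi)),
      by rw [Finset.sum_val]; exact (hall pp).2.2⟩,
      fun x hx => (hall pp).1 x (Finset.mem_val.mp hx),
      Multiset.Nodup.pairwise
        (fun x hx y hy hxy => (hall pp).2.1 x (Finset.mem_val.mp hx) y
          (Finset.mem_val.mp hy) hxy)
        (Fmap a r pp.1.parts.toFinset).nodup⟩ :
      {p : n.Partition // (∀ x ∈ p.parts, a ≤ x) ∧
        p.parts.Pairwise (fun x y => d ≤ max x y - min x y)}))
  intro pp qq hpq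
  have h1 : (Fmap a r pp.1.parts.toFinset).val = (Fmap a r qq.1.parts.toFinset).val := by
    have := congrArg (fun z => z.1.parts) hpq
    simpa using this
  have h2 : Fmap a r pp.1.parts.toFinset = Fmap a r qq.1.parts.toFinset :=
    Finset.val_injective h1
  obtain ⟨hvalp, hp1, hp2, hp3⟩ := parts_facts hD1 pp.1 pp.2.2
  obtain ⟨hvalq, hq1, hq2, hq3⟩ := parts_facts hD1 qq.1 qq.2.2
  have h3 : pp.1.parts.toFinset = qq.1.parts.toFinset :=
    Fmap_inj ha hra (by omega : 3 ≤ m) hp1 hp3 hq1 hq3 h2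
  apply Subtype.ext
  apply Nat.Partition.ext
  rw [← hvalp, ← hvalq, h3]
end

section
/- Let d = 2^r − 1 with r ≥ 6. Then for every positive integer n not equal to d, d+1, d+2, or d+3, L_d(n) ≥ Q_{d−2}^{(1)}(n). -/
/-- `QNum b d n` is the number of partitions of `n` into parts congruent to
`b` or `-b` modulo `d + 3`. -/
noncomputable def QNum (b d n : ℕ) : ℕ :=
  Nat.card {p : n.Partition //
    ∀ x ∈ p.parts, x % (d + 3) = b % (d + 3) ∨ (x + b) % (d + 3) = 0}

/-- `LNum d r n` is the number of partitions of `n` into parts congruent to one of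
`1, d+2, d+4, d+8, …, d+2^(r-1)` modulo `2d`. -/
noncomputable def LNum (d r n : ℕ) : ℕ :=
  Nat.card {p : n.Partition //
    ∀ x ∈ p.parts, x % (2 * d) = 1 ∨ ∃ j, 1 ≤ j ∧ j ≤ r - 1 ∧ x % (2 * d) = d + 2 ^ j}

namespace AlderHelper

set_option linter.unusedSectionVars false

/-- predicate: part allowed in a Q_{d-2} partition (parts congruent to ±1 mod d+1) -/
def QP (d v : ℕ) : Prop := v % (d+1) = 1 ∨ (v+1) % (d+1) = 0

/-- value-level encoding of a Q-part (other than 1 and d) as an L-part -/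
def fm (d v : ℕ) : ℕ :=
  if v % (2*d+2) = d+2 then 2*d*(v/(2*d+2)) + (d+2)
  else if v % (2*d+2) = 1 then 2*d*(v/(2*d+2)) + 1
  else if v % (2*d+2) = d then 2*d*(v/(2*d+2) - 1) + (d+16)
  else 2*d*(v/(2*d+2)) + (d+32)

/-- decoding -/
def gm (d y : ℕ) : ℕ :=
  if y % (2*d) = d+2 then (2*d+2)*(y/(2*d)) + (d+2)
  else if y % (2*d) = 1 then (2*d+2)*(y/(2*d)) + 1
  else if y % (2*d) = d+16 then (2*d+2)*(y/(2*d)+1) + d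
  else (2*d+2)*(y/(2*d)) + (2*d+1)

lemma mdiv1 {t c m : ℕ} (hm : 0 < m) (hc : c < m) : (m*t + c) % m = c ∧ (m*t + c) / m = t := by
  constructor
  · rw [Nat.mul_add_mod]; exact Nat.mod_eq_of_lt hc
  · rw [Nat.mul_add_div hm, Nat.div_eq_of_lt hc, Nat.add_zero]

section
variable {d : ℕ} (hd : 63 ≤ d)
include hd


lemma qp_struct {v : ℕ} (hv : QP d v) (h1 : v ≠ 1) (hdd : v ≠ d) :
    (∃ t, v = (2*d+2)*t + (d+2)) ∨ (∃ t, v = (2*d+2)*(t+1) + 1) ∨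
    (∃ t, v = (2*d+2)*(t+1) + d) ∨ (∃ t, v = (2*d+2)*t + (2*d+1)) := by
  rcases hv with hv | hv
  · have hvd := Nat.div_add_mod v (d+1)
    set q := v / (d+1) with hqdef
    have hq : v = (d+1)*q + 1 := by omega
    obtain ⟨s, hs | hs⟩ := Nat.even_or_odd' q
    · refine Or.inr (Or.inl ?_)
      have hs1 : 1 ≤ s := by
        rcases Nat.eq_zero_or_pos s with h0 | h0
        · exfalso; apply h1; rw [hq, hs, h0]; ring
        · exact h0
      refine ⟨s - 1, ?_⟩
      have hss : s - 1 + 1 = s := by omega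
      rw [hss, hq, hs]; ring
    · exact Or.inl ⟨s, by rw [hq, hs]; ring⟩
  · have hdvd : (d+1) ∣ (v+1) := Nat.dvd_of_mod_eq_zero hv
    obtain ⟨q, hq⟩ := hdvd
    have hq1 : 1 ≤ q := by
      rcases Nat.eq_zero_or_pos q with h0 | h0
      · rw [h0, Nat.mul_zero] at hq; omega
      · exact h0
    obtain ⟨s, hs | hs⟩ := Nat.even_or_odd' q
    · refine Or.inr (Or.inr (Or.inr ?_))
      have hs1 : 1 ≤ s := by omega
      refine ⟨s - 1, ?_⟩
      have hv' : v + 1 = (2*d+2)*(s-1) + (2*d+2) := by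
        rw [hq, hs]; have hss : s - 1 + 1 = s := by omega
        calc (d+1)*(2*s) = (2*d+2)*(s-1+1) := by rw [hss]; ring
        _ = (2*d+2)*(s-1) + (2*d+2) := by ring
      omega
    · refine Or.inr (Or.inr (Or.inl ?_))
      have hs1 : 1 ≤ s := by
        rcases Nat.eq_zero_or_pos s with h0 | h0
        · exfalso; apply hdd; rw [hs, h0] at hq; omega
        · exact h0
      refine ⟨s - 1, ?_⟩
      have hss : s - 1 + 1 = s := by omega
      rw [hss]
      have hv' : v + 1 = (2*d+2)*s + (d+1) := by
        rw [hq, hs]; ring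
      omega


lemma fm_A (t : ℕ) : fm d ((2*d+2)*t + (d+2)) = 2*d*t + (d+2) := by
  obtain ⟨hm, hdv⟩ := mdiv1 (m := 2*d+2) (t := t) (c := d+2) (by omega) (by omega)
  unfold fm; rw [hm, hdv, if_pos rfl]

lemma fm_B (t : ℕ) : fm d ((2*d+2)*(t+1) + 1) = 2*d*(t+1) + 1 := by
  obtain ⟨hm, hdv⟩ := mdiv1 (m := 2*d+2) (t := t+1) (c := 1) (by omega) (by omega)
  unfold fm; rw [hm, hdv, if_neg (by omega), if_pos rfl]

lemma fm_C (t : ℕ) : fm d ((2*d+2)*(t+1) + d) = 2*d*t + (d+16) := by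
  obtain ⟨hm, hdv⟩ := mdiv1 (m := 2*d+2) (t := t+1) (c := d) (by omega) (by omega)
  unfold fm; rw [hm, hdv, if_neg (by omega), if_neg (by omega), if_pos rfl]
  simp

lemma fm_D (t : ℕ) : fm d ((2*d+2)*t + (2*d+1)) = 2*d*t + (d+32) := by
  obtain ⟨hm, hdv⟩ := mdiv1 (m := 2*d+2) (t := t) (c := 2*d+1) (by omega) (by omega)
  unfold fm; rw [hm, hdv, if_neg (by omega), if_neg (by omega), if_neg (by omega)]

lemma gm_A (t : ℕ) : gm d (2*d*t + (d+2)) = (2*d+2)*t + (d+2) := by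
  obtain ⟨hm, hdv⟩ := mdiv1 (m := 2*d) (t := t) (c := d+2) (by omega) (by omega)
  unfold gm; rw [hm, hdv, if_pos rfl]

lemma gm_B (t : ℕ) : gm d (2*d*t + 1) = (2*d+2)*t + 1 := by
  obtain ⟨hm, hdv⟩ := mdiv1 (m := 2*d) (t := t) (c := 1) (by omega) (by omega)
  unfold gm; rw [hm, hdv, if_neg (by omega), if_pos rfl]

lemma gm_C (t : ℕ) : gm d (2*d*t + (d+16)) = (2*d+2)*(t+1) + d := by
  obtain ⟨hm, hdv⟩ := mdiv1 (m := 2*d) (t := t) (c := d+16) (by omega) (by omega)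
  unfold gm; rw [hm, hdv, if_neg (by omega), if_neg (by omega), if_pos rfl]

lemma gm_D (t : ℕ) : gm d (2*d*t + (d+32)) = (2*d+2)*t + (2*d+1) := by
  obtain ⟨hm, hdv⟩ := mdiv1 (m := 2*d) (t := t) (c := d+32) (by omega) (by omega)
  unfold gm; rw [hm, hdv, if_neg (by omega), if_neg (by omega), if_neg (by omega)]


lemma fm_spec {v : ℕ} (hv : QP d v) (h1 : v ≠ 1) (hdd : v ≠ d) :
    fm d v ≤ v ∧ gm d (fm d v) = v ∧ 1 ≤ fm d v ∧
    fm d v ≠ 1 ∧ fm d v ≠ d+4 ∧ fm d v ≠ d+8 ∧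
    (fm d v = d+16 → v = 3*d+2 ∧ v - fm d v = 2*d-14) ∧
    (fm d v % (2*d) = 1 ∨ fm d v % (2*d) = d+2 ∨ fm d v % (2*d) = d+16 ∨ fm d v % (2*d) = d+32) ∧
    (v - fm d v ≤ 3 → (v = d+2 ∧ fm d v = d+2) ∨ (v = 3*d+4 ∧ v - fm d v = 2) ∨ (v = 2*d+3 ∧ v - fm d v = 2)) := by
  rcases qp_struct hd hv h1 hdd with ⟨t, rfl⟩ | ⟨t, rfl⟩ | ⟨t, rfl⟩ | ⟨t, rfl⟩
  · rw [fm_A hd t, gm_A hd t]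
    have e1 : (2*d+2)*t = 2*(d*t) + 2*t := by ring
    have e2 : 2*d*t = 2*(d*t) := by ring
    have e5 : (t = 0 ∧ d*t = 0) ∨ (1 ≤ t ∧ d ≤ d*t) := by
      rcases Nat.eq_zero_or_pos t with h|h
      · left; simp [h]
      · right; exact ⟨h, Nat.le_mul_of_pos_right d h⟩
    have hm := (mdiv1 (m := 2*d) (t := t) (c := d+2) (by omega) (by omega)).1
    refine ⟨by omega, rfl, by omega, by omega, by omega, by omega, by omega, by rw [e2] at hm ⊢; omega, ?_⟩
    intro hsl
    have ht : t ≤ 1 := by omega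
    interval_cases t <;> omega
  · rw [fm_B hd t, gm_B hd (t+1)]
    have e1 : (2*d+2)*(t+1) = 2*(d*t) + 2*t + 2*d + 2 := by ring
    have e2 : 2*d*(t+1) = 2*(d*t) + 2*d := by ring
    have e5 : (t = 0 ∧ d*t = 0) ∨ (1 ≤ t ∧ d ≤ d*t) := by
      rcases Nat.eq_zero_or_pos t with h|h
      · left; simp [h]
      · right; exact ⟨h, Nat.le_mul_of_pos_right d h⟩
    have hm := (mdiv1 (m := 2*d) (t := t+1) (c := 1) (by omega) (by omega)).1
    refine ⟨by omega, rfl, by omega, by omega, by omega, by omega, by omega, by rw [e2] at hm ⊢; omega, ?_⟩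
    intro hsl
    have ht : t = 0 := by omega
    subst ht; omega
  · rw [fm_C hd t, gm_C hd t]
    have e1 : (2*d+2)*(t+1) = 2*(d*t) + 2*t + 2*d + 2 := by ring
    have e2 : 2*d*t = 2*(d*t) := by ring
    have e5 : (t = 0 ∧ d*t = 0) ∨ (1 ≤ t ∧ d ≤ d*t) := by
      rcases Nat.eq_zero_or_pos t with h|h
      · left; simp [h]
      · right; exact ⟨h, Nat.le_mul_of_pos_right d h⟩
    have hm := (mdiv1 (m := 2*d) (t := t) (c := d+16) (by omega) (by omega)).1
    refine ⟨by omega, rfl, by omega, by omega, by omega, by omega, ?_, by rw [e2] at hm ⊢; omega, by omega⟩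
    intro h16
    have ht : t = 0 := by omega
    subst ht; omega
  · rw [fm_D hd t, gm_D hd t]
    have e1 : (2*d+2)*t = 2*(d*t) + 2*t := by ring
    have e2 : 2*d*t = 2*(d*t) := by ring
    have e5 : (t = 0 ∧ d*t = 0) ∨ (1 ≤ t ∧ d ≤ d*t) := by
      rcases Nat.eq_zero_or_pos t with h|h
      · left; simp [h]
      · right; exact ⟨h, Nat.le_mul_of_pos_right d h⟩
    have hm := (mdiv1 (m := 2*d) (t := t) (c := d+32) (by omega) (by omega)).1
    exact ⟨by omega, rfl, by omega, by omega, by omega, by omega, by omega, by rw [e2] at hm ⊢; omega, by omega⟩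

lemma fm_inj {u v : ℕ} (hu : QP d u) (hu1 : u ≠ 1) (hud : u ≠ d)
    (hv : QP d v) (hv1 : v ≠ 1) (hvd : v ≠ d) (h : fm d u = fm d v) : u = v := by
  have h1 := (fm_spec hd hu hu1 hud).2.1
  have h2 := (fm_spec hd hv hv1 hvd).2.1
  rw [← h1, ← h2, h]


lemma fm_d2 : fm d (d+2) = d+2 := by
  have h := fm_A hd 0
  rw [show (2*d+2)*0 + (d+2) = d+2 by ring, show 2*d*0 + (d+2) = d+2 by ring] at h
  exact h

lemma fm_3d4 : fm d (3*d+4) = 3*d+2 := by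
  have h := fm_A hd 1
  rw [show (2*d+2)*1 + (d+2) = 3*d+4 by ring, show 2*d*1 + (d+2) = 3*d+2 by ring] at h
  exact h

lemma fm_2d3 : fm d (2*d+3) = 2*d+1 := by
  have h := fm_B hd 0
  rw [show (2*d+2)*(0+1) + 1 = 2*d+3 by ring, show 2*d*(0+1) + 1 = 2*d+1 by ring] at h
  exact h

end

def restof (d : ℕ) (s : Multiset ℕ) : Multiset ℕ := s.filter (fun v => ¬(v = 1 ∨ v = d))
noncomputable def Wof (d : ℕ) (s : Multiset ℕ) : Multiset ℕ := (restof d s).map (fm d)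
noncomputable def ssumof (d : ℕ) (s : Multiset ℕ) : ℕ := ((restof d s).map (fun v => v - fm d v)).sum

noncomputable def imgof (d : ℕ) (s : Multiset ℕ) : Multiset ℕ :=
  if s.count d = 1 ∧ s.count 1 + ssumof d s ≤ 3 then
    if (restof d s).filter (fun v => ¬ v = d+2) = 0 then
      if 2 ≤ (restof d s).count (d+2) then
        (d+4) ::ₘ (d+4) ::ₘ (Multiset.replicate ((restof d s).count (d+2) - 2) (d+2)
          + Multiset.replicate (s.count 1 + (d-4)) 1)
      else
        (d+16) ::ₘ Multiset.replicate (s.count 1 + (d-14)) 1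
    else if (restof d s).filter (fun v => ¬ v = d+2) = {2*d+3} then
      if 1 ≤ (restof d s).count (d+2) then
        (d+4) ::ₘ (d+4) ::ₘ (d+8) ::ₘ (Multiset.replicate ((restof d s).count (d+2) - 1) (d+2)
          + Multiset.replicate (s.count 1 + (d-11)) 1)
      else
        (d+8) ::ₘ (d+16) ::ₘ Multiset.replicate (s.count 1 + (d-21)) 1
    else
      (d+4) ::ₘ (d+4) ::ₘ (Multiset.replicate ((restof d s).count (d+2)) (d+2)
        + Multiset.replicate (s.count 1 + (2*d-4)) 1)
  else
    Multiset.replicate (s.count 1 + ssumof d s + (s.count d / 2)*(d-8) - 4*(s.count d % 2)) 1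
      + Wof d s + Multiset.replicate (s.count d / 2) (d+8)
      + Multiset.replicate (s.count d % 2) (d+4)

noncomputable def dec (d n : ℕ) (I : Multiset ℕ) : ℕ × ℕ × Multiset ℕ :=
  if I.count (d+4) = 2 then
    if I.count (d+8) = 1 then
      (I.count 1 - (d-11), 1, Multiset.replicate (I.count (d+2) + 1) (d+2) + {2*d+3})
    else if 2*d-4 ≤ I.count 1 then
      (I.count 1 - (2*d-4), 1, Multiset.replicate (I.count (d+2)) (d+2) + {3*d+4})
    else
      (I.count 1 - (d-4), 1, Multiset.replicate (I.count (d+2) + 2) (d+2))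
  else if I.count (d+16) = 1 ∧ I.count 1 ≤ d-11 then
    if I.count (d+8) = 1 then (I.count 1 - (d-21), 1, ({2*d+3} : Multiset ℕ))
    else (I.count 1 - (d-14), 1, ({d+2} : Multiset ℕ))
  else
    (n - (2*(I.count (d+8)) + I.count (d+4))*d
        - ((I.filter (fun y => ¬(y = 1 ∨ y = d+4 ∨ y = d+8))).map (gm d)).sum,
     2*(I.count (d+8)) + I.count (d+4),
     (I.filter (fun y => ¬(y = 1 ∨ y = d+4 ∨ y = d+8))).map (gm d))


section
variable {d : ℕ} (hd : 63 ≤ d) {s : Multiset ℕ} (Hq : ∀ x ∈ s, QP d x)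


lemma mem_restof {v : ℕ} : v ∈ restof d s ↔ v ∈ s ∧ ¬(v = 1 ∨ v = d) := by
  simp [restof]

include hd in
lemma decomp : s = Multiset.replicate (s.count 1) 1 + Multiset.replicate (s.count d) d
    + restof d s := by
  have hd1 : (1:ℕ) ≠ d := by omega
  ext y
  rw [Multiset.count_add, Multiset.count_add, Multiset.count_replicate, Multiset.count_replicate,
    restof, Multiset.count_filter]
  by_cases h1 : y = 1
  · subst h1
    split_ifs <;> omega
  · by_cases h2 : y = d
    · subst h2
      split_ifs <;> omega
    · split_ifs <;> omega

include hd in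
lemma sum_decomp : s.sum = s.count 1 + s.count d * d + (restof d s).sum := by
  conv_lhs => rw [decomp hd (s := s)]
  rw [Multiset.sum_add, Multiset.sum_add, Multiset.sum_replicate, Multiset.sum_replicate]
  simp [mul_comm]

include hd Hq

omit hd in
lemma mem_restof_qp {v : ℕ} (hv : v ∈ restof d s) : QP d v ∧ v ≠ 1 ∧ v ≠ d := by
  rw [mem_restof] at hv
  exact ⟨Hq v hv.1, fun h => hv.2 (Or.inl h), fun h => hv.2 (Or.inr h)⟩

lemma rest_sum_eq : (restof d s).sum = (Wof d s).sum + ssumof d s := by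
  rw [Wof, ssumof, ← Multiset.sum_map_add]
  have : (restof d s).map (fun v => fm d v + (v - fm d v)) = (restof d s).map id := by
    apply Multiset.map_congr rfl
    intro v hv
    obtain ⟨hq, h1, hdd⟩ := mem_restof_qp Hq hv
    have := (fm_spec hd hq h1 hdd).1
    simp; omega
  rw [this, Multiset.map_id]

end

section
variable {d : ℕ} (hd : 63 ≤ d) {s : Multiset ℕ} (Hq : ∀ x ∈ s, QP d x)

lemma count_map_of_inj {f : ℕ → ℕ} {t : Multiset ℕ} {v y : ℕ} (hy : f v = y)
    (h : ∀ u ∈ t, f u = y → u = v) : (t.map f).count y = t.count v := by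
  induction t using Multiset.induction_on with
  | empty => simp
  | cons a t ih =>
    rw [Multiset.map_cons, Multiset.count_cons, Multiset.count_cons]
    rw [ih (fun u hu hfu => h u (Multiset.mem_cons_of_mem hu) hfu)]
    by_cases hfa : f a = y
    · have hav : a = v := h a (Multiset.mem_cons_self a t) hfa
      rw [if_pos hfa.symm, if_pos hav.symm]
    · have hav : ¬ a = v := fun hav => hfa (hav ▸ hy)
      rw [if_neg (fun h => hfa h.symm), if_neg (fun h => hav h.symm)]

lemma count_map_zero {f : ℕ → ℕ} {t : Multiset ℕ} {y : ℕ} (h : ∀ u ∈ t, f u ≠ y) :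
    (t.map f).count y = 0 := by
  rw [Multiset.count_eq_zero]
  intro hy
  obtain ⟨u, hu, hfu⟩ := Multiset.mem_map.1 hy
  exact h u hu hfu

lemma rest_split : restof d s = Multiset.replicate ((restof d s).count (d+2)) (d+2)
    + (restof d s).filter (fun v => ¬ v = d+2) := by
  conv_lhs => rw [← Multiset.filter_add_not (fun v => v = d+2) (restof d s)]
  congr 1
  exact Multiset.filter_eq' _ _

omit Hq in
include hd in
lemma ssum_split : ssumof d s =
    (((restof d s).filter (fun v => ¬ v = d+2)).map (fun v => v - fm d v)).sum := by
  conv_lhs => rw [ssumof, rest_split (d := d) (s := s)]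
  rw [Multiset.map_add, Multiset.sum_add, Multiset.map_replicate]
  rw [fm_d2 hd]
  simp

include hd Hq in
lemma bad_classify (hss : ssumof d s ≤ 3) :
    ((restof d s).filter (fun v => ¬ v = d+2) = 0 ∧
      restof d s = Multiset.replicate ((restof d s).count (d+2)) (d+2) ∧ ssumof d s = 0) ∨
    ((restof d s).filter (fun v => ¬ v = d+2) = {3*d+4} ∧
      restof d s = Multiset.replicate ((restof d s).count (d+2)) (d+2) + {3*d+4} ∧ ssumof d s = 2) ∨
    ((restof d s).filter (fun v => ¬ v = d+2) = {2*d+3} ∧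
      restof d s = Multiset.replicate ((restof d s).count (d+2)) (d+2) + {2*d+3} ∧ ssumof d s = 2) := by
  set u := (restof d s).filter (fun v => ¬ v = d+2) with hu
  have husub : ∀ v ∈ u, v ∈ restof d s ∧ ¬ v = d+2 := fun v hv => Multiset.mem_filter.1 hv
  have hsl2 : ∀ y ∈ u.map (fun v => v - fm d v), 2 ≤ y := by
    intro y hy
    obtain ⟨v, hv, rfl⟩ := Multiset.mem_map.1 hy
    obtain ⟨hvr, hvne⟩ := husub v hv
    obtain ⟨hq, h1, hdd⟩ := mem_restof_qp Hq hvr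
    by_cases hle : v - fm d v ≤ 3
    · rcases (fm_spec hd hq h1 hdd).2.2.2.2.2.2.2.2 hle with ⟨h, _⟩ | ⟨_, h⟩ | ⟨_, h⟩ <;> omega
    · omega
  have hsplit := ssum_split (s := s) hd
  have hule : (u.map (fun v => v - fm d v)).sum = ssumof d s := hsplit.symm
  have hcard : 2 * u.card ≤ ssumof d s := by
    have := Multiset.card_nsmul_le_sum hsl2
    rw [Multiset.card_map, smul_eq_mul] at this
    omega
  have hcard1 : u.card ≤ 1 := by omega
  interval_cases hc : u.card
  · left
    have hu0 : u = 0 := Multiset.card_eq_zero.1 hc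
    refine ⟨hu0, ?_, ?_⟩
    · conv_lhs => rw [rest_split (d := d) (s := s)]
      rw [← hu, hu0, add_zero]
    · rw [hsplit, ← hu, hu0]; simp
  · obtain ⟨v, hv⟩ := Multiset.card_eq_one.1 hc
    have hvmem : v ∈ u := by rw [hv]; exact Multiset.mem_singleton_self v
    obtain ⟨hvr, hvne⟩ := husub v hvmem
    obtain ⟨hq, h1, hdd⟩ := mem_restof_qp Hq hvr
    have hsv : ssumof d s = v - fm d v := by rw [hsplit, ← hu, hv]; simp
    have hle : v - fm d v ≤ 3 := by omega
    rcases (fm_spec hd hq h1 hdd).2.2.2.2.2.2.2.2 hle with ⟨h, _⟩ | ⟨h, h2⟩ | ⟨h, h2⟩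
    · exact absurd h hvne
    · right; left
      refine ⟨by rw [hv, h], ?_, by omega⟩
      conv_lhs => rw [rest_split (d := d) (s := s)]
      rw [← hu, hv, h]
    · right; right
      refine ⟨by rw [hv, h], ?_, by omega⟩
      conv_lhs => rw [rest_split (d := d) (s := s)]
      rw [← hu, hv, h]


end


section
variable {d n : ℕ} (hd : 63 ≤ d) {s : Multiset ℕ} (Hq : ∀ x ∈ s, QP d x)


set_option maxHeartbeats 2000000 in
include hd Hq in
theorem img_spec (hsum : s.sum = n) (hexc : ∀ b ≤ 3, n ≠ d + b) :
    (imgof d s).sum = n ∧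
    dec d n (imgof d s) = (s.count 1, s.count d, restof d s) ∧
    (∀ y ∈ imgof d s, y = 1 ∨ y = d+2 ∨ y = d+4 ∨ y = d+8 ∨ y = d+16 ∨
      ∃ v ∈ restof d s, y = fm d v) := by
  have hsd : s.sum = s.count 1 + s.count d * d + (restof d s).sum := sum_decomp hd
  have hQR : ∀ v ∈ restof d s, QP d v ∧ v ≠ 1 ∧ v ≠ d := fun v hv => mem_restof_qp Hq hv
  rw [imgof]
  by_cases hb : s.count d = 1 ∧ s.count 1 + ssumof d s ≤ 3
  · -- SPECIAL cases
    rw [if_pos hb]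
    obtain ⟨hk1, ha3⟩ := hb
    rw [hk1, one_mul] at hsd
    have ha : s.count 1 ≤ 3 := by omega
    rcases bad_classify hd Hq (by omega) with ⟨hf, hrest, hss⟩ | ⟨hf, hrest, hss⟩ | ⟨hf, hrest, hss⟩
    · -- u = 0 : cases C1 / C4
      rw [if_pos hf]
      have hrsum : (restof d s).sum = ((restof d s).count (d+2)) * (d+2) := by
        conv_lhs => rw [hrest]
        rw [Multiset.sum_replicate, smul_eq_mul]
      by_cases hx : 2 ≤ (restof d s).count (d+2)
      · -- C1
        rw [if_pos hx]
        set x := (restof d s).count (d+2) with hxd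
        have hc4 : ((d+4) ::ₘ (d+4) ::ₘ (Multiset.replicate (x - 2) (d+2)
            + Multiset.replicate (s.count 1 + (d-4)) 1)).count (d+4) = 2 := by
          rw [Multiset.count_cons_self, Multiset.count_cons_self, Multiset.count_add,
            Multiset.count_replicate, Multiset.count_replicate, if_neg (by omega), if_neg (by omega)]
        have hc8 : ((d+4) ::ₘ (d+4) ::ₘ (Multiset.replicate (x - 2) (d+2)
            + Multiset.replicate (s.count 1 + (d-4)) 1)).count (d+8) = 0 := by
          rw [Multiset.count_cons_of_ne (by omega), Multiset.count_cons_of_ne (by omega),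
            Multiset.count_add, Multiset.count_replicate, Multiset.count_replicate,
            if_neg (by omega), if_neg (by omega)]
        have hc1 : ((d+4) ::ₘ (d+4) ::ₘ (Multiset.replicate (x - 2) (d+2)
            + Multiset.replicate (s.count 1 + (d-4)) 1)).count 1 = s.count 1 + (d-4) := by
          rw [Multiset.count_cons_of_ne (by omega), Multiset.count_cons_of_ne (by omega),
            Multiset.count_add, Multiset.count_replicate, Multiset.count_replicate,
            if_neg (by omega), if_pos rfl]
          omega
        have hc2 : ((d+4) ::ₘ (d+4) ::ₘ (Multiset.replicate (x - 2) (d+2)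
            + Multiset.replicate (s.count 1 + (d-4)) 1)).count (d+2) = x - 2 := by
          rw [Multiset.count_cons_of_ne (by omega), Multiset.count_cons_of_ne (by omega),
            Multiset.count_add, Multiset.count_replicate, Multiset.count_replicate,
            if_pos rfl, if_neg (by omega)]
          omega
        refine ⟨?_, ?_, ?_⟩
        · rw [Multiset.sum_cons, Multiset.sum_cons, Multiset.sum_add,
            Multiset.sum_replicate, Multiset.sum_replicate, smul_eq_mul, smul_eq_mul]
          have hxe : (x-2)*(d+2) + 2*(d+2) = x*(d+2) := by
            rw [← Nat.add_mul]; congr 1; omega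
          omega
        · rw [dec, if_pos hc4, if_neg (by omega), if_neg (by omega)]
          rw [hc1, hc2]
          refine Prod.ext ?_ (Prod.ext ?_ ?_) <;> simp only
          · omega
          · omega
          · rw [show x - 2 + 2 = x by omega]
            exact hrest.symm
        · intro y hy
          simp only [Multiset.mem_cons, Multiset.mem_add, Multiset.mem_replicate] at hy
          tauto
      · -- C4
        rw [if_neg hx]
        set x := (restof d s).count (d+2) with hxd
        have hx1 : x = 1 := by
          have hx0 : x = 0 ∨ x = 1 := by omega
          rcases hx0 with h0 | h1
          · exfalso
            rw [h0, Nat.zero_mul] at hrsum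
            exact hexc (s.count 1) ha (by omega)
          · exact h1
        rw [hx1, one_mul] at hrsum
        have hc4 : ((d+16) ::ₘ Multiset.replicate (s.count 1 + (d-14)) 1).count (d+4) = 0 := by
          rw [Multiset.count_cons_of_ne (by omega), Multiset.count_replicate, if_neg (by omega)]
        have hc16 : ((d+16) ::ₘ Multiset.replicate (s.count 1 + (d-14)) 1).count (d+16) = 1 := by
          rw [Multiset.count_cons_self, Multiset.count_replicate, if_neg (by omega)]
        have hc8 : ((d+16) ::ₘ Multiset.replicate (s.count 1 + (d-14)) 1).count (d+8) = 0 := by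
          rw [Multiset.count_cons_of_ne (by omega), Multiset.count_replicate, if_neg (by omega)]
        have hc1 : ((d+16) ::ₘ Multiset.replicate (s.count 1 + (d-14)) 1).count 1
            = s.count 1 + (d-14) := by
          rw [Multiset.count_cons_of_ne (by omega), Multiset.count_replicate, if_pos rfl]
        refine ⟨?_, ?_, ?_⟩
        · rw [Multiset.sum_cons, Multiset.sum_replicate, smul_eq_mul]
          omega
        · rw [dec, if_neg (by omega), if_pos ⟨hc16, by omega⟩, if_neg (by omega)]
          rw [hc1]
          refine Prod.ext ?_ (Prod.ext ?_ ?_) <;> simp only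
          · omega
          · omega
          · rw [hrest, hx1, Multiset.replicate_one]
        · intro y hy
          simp only [Multiset.mem_cons, Multiset.mem_replicate] at hy
          tauto
    · -- C2 : u = {3d+4}
      rw [if_neg (by rw [hf]; simp), if_neg (by rw [hf]; intro h; simp only [Multiset.singleton_inj] at h; omega)]
      set x := (restof d s).count (d+2) with hxd
      have hrsum : (restof d s).sum = x * (d+2) + (3*d+4) := by
        conv_lhs => rw [hrest]
        rw [Multiset.sum_add, Multiset.sum_replicate, smul_eq_mul, Multiset.sum_singleton]
      have hc4 : ((d+4) ::ₘ (d+4) ::ₘ (Multiset.replicate x (d+2)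
          + Multiset.replicate (s.count 1 + (2*d-4)) 1)).count (d+4) = 2 := by
        rw [Multiset.count_cons_self, Multiset.count_cons_self, Multiset.count_add,
          Multiset.count_replicate, Multiset.count_replicate, if_neg (by omega), if_neg (by omega)]
      have hc8 : ((d+4) ::ₘ (d+4) ::ₘ (Multiset.replicate x (d+2)
          + Multiset.replicate (s.count 1 + (2*d-4)) 1)).count (d+8) = 0 := by
        rw [Multiset.count_cons_of_ne (by omega), Multiset.count_cons_of_ne (by omega),
          Multiset.count_add, Multiset.count_replicate, Multiset.count_replicate,
          if_neg (by omega), if_neg (by omega)]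
      have hc1 : ((d+4) ::ₘ (d+4) ::ₘ (Multiset.replicate x (d+2)
          + Multiset.replicate (s.count 1 + (2*d-4)) 1)).count 1 = s.count 1 + (2*d-4) := by
        rw [Multiset.count_cons_of_ne (by omega), Multiset.count_cons_of_ne (by omega),
          Multiset.count_add, Multiset.count_replicate, Multiset.count_replicate,
          if_neg (by omega), if_pos rfl]
        omega
      have hc2 : ((d+4) ::ₘ (d+4) ::ₘ (Multiset.replicate x (d+2)
          + Multiset.replicate (s.count 1 + (2*d-4)) 1)).count (d+2) = x := by
        rw [Multiset.count_cons_of_ne (by omega), Multiset.count_cons_of_ne (by omega),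
          Multiset.count_add, Multiset.count_replicate, Multiset.count_replicate,
          if_pos rfl, if_neg (by omega)]
        omega
      refine ⟨?_, ?_, ?_⟩
      · rw [Multiset.sum_cons, Multiset.sum_cons, Multiset.sum_add,
          Multiset.sum_replicate, Multiset.sum_replicate, smul_eq_mul, smul_eq_mul]
        omega
      · rw [dec, if_pos hc4, if_neg (by omega), if_pos (by omega)]
        rw [hc1, hc2]
        refine Prod.ext ?_ (Prod.ext ?_ ?_) <;> simp only
        · omega
        · omega
        · exact hrest.symm
      · intro y hy
        simp only [Multiset.mem_cons, Multiset.mem_add, Multiset.mem_replicate] at hy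
        tauto
    · -- u = {2d+3} : cases C3 / C6
      rw [if_neg (by rw [hf]; simp), if_pos hf]
      set x := (restof d s).count (d+2) with hxd
      have hrsum : (restof d s).sum = x * (d+2) + (2*d+3) := by
        conv_lhs => rw [hrest]
        rw [Multiset.sum_add, Multiset.sum_replicate, smul_eq_mul, Multiset.sum_singleton]
      by_cases hx : 1 ≤ x
      · -- C3
        rw [if_pos hx]
        have hc4 : ((d+4) ::ₘ (d+4) ::ₘ (d+8) ::ₘ (Multiset.replicate (x-1) (d+2)
            + Multiset.replicate (s.count 1 + (d-11)) 1)).count (d+4) = 2 := by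
          rw [Multiset.count_cons_self, Multiset.count_cons_self,
            Multiset.count_cons_of_ne (by omega), Multiset.count_add,
            Multiset.count_replicate, Multiset.count_replicate, if_neg (by omega), if_neg (by omega)]
        have hc8 : ((d+4) ::ₘ (d+4) ::ₘ (d+8) ::ₘ (Multiset.replicate (x-1) (d+2)
            + Multiset.replicate (s.count 1 + (d-11)) 1)).count (d+8) = 1 := by
          rw [Multiset.count_cons_of_ne (by omega), Multiset.count_cons_of_ne (by omega),
            Multiset.count_cons_self, Multiset.count_add,
            Multiset.count_replicate, Multiset.count_replicate, if_neg (by omega), if_neg (by omega)]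
        have hc1 : ((d+4) ::ₘ (d+4) ::ₘ (d+8) ::ₘ (Multiset.replicate (x-1) (d+2)
            + Multiset.replicate (s.count 1 + (d-11)) 1)).count 1 = s.count 1 + (d-11) := by
          rw [Multiset.count_cons_of_ne (by omega), Multiset.count_cons_of_ne (by omega),
            Multiset.count_cons_of_ne (by omega), Multiset.count_add,
            Multiset.count_replicate, Multiset.count_replicate, if_neg (by omega), if_pos rfl]
          omega
        have hc2 : ((d+4) ::ₘ (d+4) ::ₘ (d+8) ::ₘ (Multiset.replicate (x-1) (d+2)
            + Multiset.replicate (s.count 1 + (d-11)) 1)).count (d+2) = x - 1 := by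
          rw [Multiset.count_cons_of_ne (by omega), Multiset.count_cons_of_ne (by omega),
            Multiset.count_cons_of_ne (by omega), Multiset.count_add,
            Multiset.count_replicate, Multiset.count_replicate, if_pos rfl, if_neg (by omega)]
          omega
        refine ⟨?_, ?_, ?_⟩
        · rw [Multiset.sum_cons, Multiset.sum_cons, Multiset.sum_cons, Multiset.sum_add,
            Multiset.sum_replicate, Multiset.sum_replicate, smul_eq_mul, smul_eq_mul]
          have hxe : (x-1)*(d+2) + 1*(d+2) = x*(d+2) := by
            rw [← Nat.add_mul]; congr 1; omega
          omega
        · rw [dec, if_pos hc4, if_pos hc8]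
          rw [hc1, hc2]
          refine Prod.ext ?_ (Prod.ext ?_ ?_) <;> simp only
          · omega
          · omega
          · rw [show x - 1 + 1 = x by omega]
            exact hrest.symm
        · intro y hy
          simp only [Multiset.mem_cons, Multiset.mem_add, Multiset.mem_replicate] at hy
          tauto
      · -- C6
        rw [if_neg hx]
        have hx0 : x = 0 := by omega
        rw [hx0, Nat.zero_mul] at hrsum
        have hc4 : ((d+8) ::ₘ (d+16) ::ₘ Multiset.replicate (s.count 1 + (d-21)) 1).count (d+4) = 0 := by
          rw [Multiset.count_cons_of_ne (by omega), Multiset.count_cons_of_ne (by omega),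
            Multiset.count_replicate, if_neg (by omega)]
        have hc8 : ((d+8) ::ₘ (d+16) ::ₘ Multiset.replicate (s.count 1 + (d-21)) 1).count (d+8) = 1 := by
          rw [Multiset.count_cons_self, Multiset.count_cons_of_ne (by omega),
            Multiset.count_replicate, if_neg (by omega)]
        have hc16 : ((d+8) ::ₘ (d+16) ::ₘ Multiset.replicate (s.count 1 + (d-21)) 1).count (d+16) = 1 := by
          rw [Multiset.count_cons_of_ne (by omega), Multiset.count_cons_self,
            Multiset.count_replicate, if_neg (by omega)]
        have hc1 : ((d+8) ::ₘ (d+16) ::ₘ Multiset.replicate (s.count 1 + (d-21)) 1).count 1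
            = s.count 1 + (d-21) := by
          rw [Multiset.count_cons_of_ne (by omega), Multiset.count_cons_of_ne (by omega),
            Multiset.count_replicate, if_pos rfl]
        refine ⟨?_, ?_, ?_⟩
        · rw [Multiset.sum_cons, Multiset.sum_cons, Multiset.sum_replicate, smul_eq_mul]
          omega
        · rw [dec, if_neg (by omega), if_pos ⟨hc16, by omega⟩, if_pos hc8]
          rw [hc1]
          refine Prod.ext ?_ (Prod.ext ?_ ?_) <;> simp only
          · omega
          · omega
          · rw [hrest, hx0]
            simp
        · intro y hy
          simp only [Multiset.mem_cons, Multiset.mem_replicate] at hy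
          tauto
  · -- NORMAL case
    rw [if_neg hb]
    have hW1 : (Wof d s).count 1 = 0 := by
      apply count_map_zero
      intro v hv
      exact ((fm_spec hd (hQR v hv).1 (hQR v hv).2.1 (hQR v hv).2.2).2.2.2.1)
    have hW4 : (Wof d s).count (d+4) = 0 := by
      apply count_map_zero
      intro v hv
      exact ((fm_spec hd (hQR v hv).1 (hQR v hv).2.1 (hQR v hv).2.2).2.2.2.2.1)
    have hW8 : (Wof d s).count (d+8) = 0 := by
      apply count_map_zero
      intro v hv
      exact ((fm_spec hd (hQR v hv).1 (hQR v hv).2.1 (hQR v hv).2.2).2.2.2.2.2.1)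
    set o := s.count 1 + ssumof d s + (s.count d / 2)*(d-8) - 4*(s.count d % 2) with ho
    set I := Multiset.replicate o 1 + Wof d s + Multiset.replicate (s.count d / 2) (d+8)
      + Multiset.replicate (s.count d % 2) (d+4) with hI
    have hrq : (restof d s).sum = (Wof d s).sum + ssumof d s := rest_sum_eq hd Hq
    have hc1 : I.count 1 = o := by
      rw [hI, Multiset.count_add, Multiset.count_add, Multiset.count_add, hW1,
        Multiset.count_replicate, Multiset.count_replicate, Multiset.count_replicate,
        if_pos rfl, if_neg (by omega), if_neg (by omega)]
      omega
    have hc4 : I.count (d+4) = s.count d % 2 := by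
      rw [hI, Multiset.count_add, Multiset.count_add, Multiset.count_add, hW4,
        Multiset.count_replicate, Multiset.count_replicate, Multiset.count_replicate,
        if_neg (by omega), if_neg (by omega), if_pos rfl]
      omega
    have hc8 : I.count (d+8) = s.count d / 2 := by
      rw [hI, Multiset.count_add, Multiset.count_add, Multiset.count_add, hW8,
        Multiset.count_replicate, Multiset.count_replicate, Multiset.count_replicate,
        if_neg (by omega), if_pos rfl, if_neg (by omega)]
      omega
    have hc16 : I.count (d+16) = (Wof d s).count (d+16) := by
      rw [hI, Multiset.count_add, Multiset.count_add, Multiset.count_add,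
        Multiset.count_replicate, Multiset.count_replicate, Multiset.count_replicate,
        if_neg (by omega), if_neg (by omega), if_neg (by omega)]
      omega
    -- arithmetic facts
    have hq2 : s.count d = 2*(s.count d / 2) + s.count d % 2 := by omega
    have he1 : (s.count d/2)*(d-8) + (s.count d/2)*8 = (s.count d/2)*d := by
      rw [← Nat.mul_add]; congr 1; omega
    have he2 : (s.count d/2)*(d+8) = (s.count d/2)*d + (s.count d/2)*8 := by
      rw [Nat.mul_add]
    have he3 : s.count d * d = 2*((s.count d/2)*d) + (s.count d%2)*d := by
      conv_lhs => rw [hq2]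
      ring
    have he4 : (s.count d%2)*(d+4) = (s.count d%2)*d + (s.count d%2)*4 := by
      rw [Nat.mul_add]
    have he5 : s.count d % 2 = 0 ∧ (s.count d%2)*d = 0 ∧ (s.count d%2)*4 = 0 ∨
        s.count d % 2 = 1 ∧ (s.count d%2)*d = d ∧ (s.count d%2)*4 = 4 := by
      rcases Nat.mod_two_eq_zero_or_one (s.count d) with h | h <;> rw [h] <;> simp <;> omega
    have hborrow : 4*(s.count d % 2) ≤ s.count 1 + ssumof d s + (s.count d/2)*(d-8) := by
      rcases Nat.mod_two_eq_zero_or_one (s.count d) with h | h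
      · rw [h]; omega
      · rw [h]
        by_cases hk1 : s.count d = 1
        · have : ¬ (s.count 1 + ssumof d s ≤ 3) := fun hcon => hb ⟨hk1, hcon⟩
          omega
        · have h2 : 1 ≤ s.count d / 2 := by omega
          have : d - 8 ≤ (s.count d/2)*(d-8) := Nat.le_mul_of_pos_left _ h2
          omega
    refine ⟨?_, ?_, ?_⟩
    · rw [hI, Multiset.sum_add, Multiset.sum_add, Multiset.sum_add,
        Multiset.sum_replicate, Multiset.sum_replicate, Multiset.sum_replicate,
        smul_eq_mul, smul_eq_mul, smul_eq_mul, mul_one]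
      rw [ho]
      omega
    · rw [dec, if_neg (by omega)]
      rw [if_neg ?hc16cond]
      case hc16cond =>
        rintro ⟨h16, h1le⟩
        rw [hc16] at h16
        have hmem : (d+16) ∈ Wof d s := by
          rw [← Multiset.count_pos, h16]; omega
        obtain ⟨v, hv, hfv⟩ := Multiset.mem_map.1 hmem
        obtain ⟨hv32, hsl⟩ := (fm_spec hd (hQR v hv).1 (hQR v hv).2.1 (hQR v hv).2.2).2.2.2.2.2.2.1 hfv
        have hmem2 : (v - fm d v) ∈ (restof d s).map (fun v => v - fm d v) :=
          Multiset.mem_map_of_mem _ hv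
        have hle : v - fm d v ≤ ssumof d s :=
          Multiset.single_le_sum (fun y _ => Nat.zero_le y) _ hmem2
        rw [hc1, ho] at h1le
        have hP : 0 ≤ (s.count d/2)*(d-8) := Nat.zero_le _
        omega
      have hfA : (Multiset.replicate o 1).filter (fun y => ¬(y = 1 ∨ y = d+4 ∨ y = d+8)) = 0 :=
        Multiset.filter_eq_nil.2 (fun y hy => by
          have := Multiset.eq_of_mem_replicate hy; simp [this])
      have hfC : (Multiset.replicate (s.count d / 2) (d+8)).filter
          (fun y => ¬(y = 1 ∨ y = d+4 ∨ y = d+8)) = 0 :=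
        Multiset.filter_eq_nil.2 (fun y hy => by
          have := Multiset.eq_of_mem_replicate hy; simp [this])
      have hfD : (Multiset.replicate (s.count d % 2) (d+4)).filter
          (fun y => ¬(y = 1 ∨ y = d+4 ∨ y = d+8)) = 0 :=
        Multiset.filter_eq_nil.2 (fun y hy => by
          have := Multiset.eq_of_mem_replicate hy; simp [this])
      have hfB : (Wof d s).filter (fun y => ¬(y = 1 ∨ y = d+4 ∨ y = d+8)) = Wof d s :=
        Multiset.filter_eq_self.2 (fun y hy => by
          obtain ⟨v, hv, rfl⟩ := Multiset.mem_map.1 hy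
          have hs := fm_spec hd (hQR v hv).1 (hQR v hv).2.1 (hQR v hv).2.2
          push_neg
          exact ⟨hs.2.2.2.1, hs.2.2.2.2.1, hs.2.2.2.2.2.1⟩)
      have hfil : I.filter (fun y => ¬(y = 1 ∨ y = d+4 ∨ y = d+8)) = Wof d s := by
        rw [hI, Multiset.filter_add, Multiset.filter_add, Multiset.filter_add,
          hfA, hfB, hfC, hfD]
        simp
      have hmapgm : (Wof d s).map (gm d) = restof d s := by
        rw [Wof, Multiset.map_map]
        rw [show ((gm d) ∘ (fm d)) = fun v => gm d (fm d v) from rfl]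
        calc Multiset.map (fun v => gm d (fm d v)) (restof d s)
            = Multiset.map id (restof d s) := Multiset.map_congr rfl (fun v hv =>
              (fm_spec hd (hQR v hv).1 (hQR v hv).2.1 (hQR v hv).2.2).2.1)
          _ = restof d s := Multiset.map_id _
      rw [hfil, hmapgm, hc4, hc8]
      rw [show 2*(s.count d/2) + s.count d % 2 = s.count d by omega]
      rw [show n - s.count d * d - (restof d s).sum = s.count 1 by omega]
    · intro y hy
      rw [hI] at hy
      simp only [Multiset.mem_add, Multiset.mem_replicate, Wof, Multiset.mem_map] at hy
      rcases hy with ((⟨_, rfl⟩ | ⟨v, hv, hfv⟩) | ⟨_, rfl⟩) | ⟨_, rfl⟩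
      · tauto
      · exact Or.inr (Or.inr (Or.inr (Or.inr (Or.inr ⟨v, hv, hfv.symm⟩))))
      · tauto
      · tauto


end
end AlderHelper


open AlderHelper in
theorem L_dominates_Q (r d n : ℕ) (hr : 6 ≤ r) (hd : d = 2 ^ r - 1) (hn : 0 < n)
    (h1 : n ≠ d) (h2 : n ≠ d + 1) (h3 : n ≠ d + 2) (h4 : n ≠ d + 3) :
    QNum 1 (d - 2) n ≤ LNum d r n := by
  have hd63 : 63 ≤ d := by
    have h64 : (64:ℕ) ≤ 2^r := by
      calc (64:ℕ) = 2^6 := by norm_num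
      _ ≤ 2^r := Nat.pow_le_pow_right (by norm_num) hr
    omega
  have hexc : ∀ b ≤ 3, n ≠ d + b := by
    intro b hb
    interval_cases b <;> omega
  have hmod : d - 2 + 3 = d + 1 := by omega
  have h1m : 1 % (d + 1) = 1 := Nat.mod_eq_of_lt (by omega)
  rw [QNum, LNum]
  -- the injection
  have hr5 : 5 ≤ r - 1 := by omega
  set QT := {p : n.Partition //
    ∀ x ∈ p.parts, x % (d - 2 + 3) = 1 % (d - 2 + 3) ∨ (x + 1) % (d - 2 + 3) = 0} with hQT
  set LT := {p : n.Partition //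
    ∀ x ∈ p.parts, x % (2 * d) = 1 ∨ ∃ j, 1 ≤ j ∧ j ≤ r - 1 ∧ x % (2 * d) = d + 2 ^ j} with hLT
  have hQP : ∀ (p : n.Partition), (∀ x ∈ p.parts, x % (d - 2 + 3) = 1 % (d - 2 + 3) ∨
      (x + 1) % (d - 2 + 3) = 0) → ∀ x ∈ p.parts, QP d x := by
    intro p hp x hx
    have := hp x hx
    rw [hmod, h1m] at this
    exact this
  have hLP : ∀ (p : n.Partition) (hp : ∀ x ∈ p.parts, QP d x),
      ∀ y ∈ imgof d p.parts, y % (2 * d) = 1 ∨ ∃ j, 1 ≤ j ∧ j ≤ r - 1 ∧ y % (2 * d) = d + 2 ^ j := by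
    intro p hp y hy
    have hQR : ∀ v ∈ restof d p.parts, QP d v ∧ v ≠ 1 ∧ v ≠ d := fun v hv => mem_restof_qp hp hv
    rcases (img_spec hd63 hp p.parts_sum hexc).2.2 y hy with rfl | rfl | rfl | rfl | rfl | ⟨v, hv, rfl⟩
    · exact Or.inl (Nat.mod_eq_of_lt (by omega))
    · exact Or.inr ⟨1, le_refl 1, by omega, by rw [Nat.mod_eq_of_lt (by omega)]; norm_num⟩
    · exact Or.inr ⟨2, by norm_num, by omega, by rw [Nat.mod_eq_of_lt (by omega)]; norm_num⟩
    · exact Or.inr ⟨3, by norm_num, by omega, by rw [Nat.mod_eq_of_lt (by omega)]; norm_num⟩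
    · exact Or.inr ⟨4, by norm_num, by omega, by rw [Nat.mod_eq_of_lt (by omega)]; norm_num⟩
    · rcases (fm_spec hd63 (hQR v hv).1 (hQR v hv).2.1 (hQR v hv).2.2).2.2.2.2.2.2.2.1 with
        hm | hm | hm | hm
      · exact Or.inl hm
      · exact Or.inr ⟨1, le_refl 1, by omega, by rw [hm]; norm_num⟩
      · exact Or.inr ⟨4, by norm_num, by omega, by rw [hm]; norm_num⟩
      · exact Or.inr ⟨5, by norm_num, by omega, by rw [hm]; norm_num⟩
  have hpos : ∀ (p : n.Partition) (hp : ∀ x ∈ p.parts, QP d x), ∀ y ∈ imgof d p.parts, 0 < y := by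
    intro p hp y hy
    have hQR : ∀ v ∈ restof d p.parts, QP d v ∧ v ≠ 1 ∧ v ≠ d := fun v hv => mem_restof_qp hp hv
    rcases (img_spec hd63 hp p.parts_sum hexc).2.2 y hy with rfl | rfl | rfl | rfl | rfl | ⟨v, hv, rfl⟩
    · omega
    · omega
    · omega
    · omega
    · omega
    · have := (fm_spec hd63 (hQR v hv).1 (hQR v hv).2.1 (hQR v hv).2.2).2.2.1
      omega
  let F : QT → LT := fun pp =>
    ⟨⟨imgof d pp.1.parts, fun hi => hpos pp.1 (hQP pp.1 pp.2) _ hi,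
      (img_spec hd63 (hQP pp.1 pp.2) pp.1.parts_sum hexc).1⟩,
      hLP pp.1 (hQP pp.1 pp.2)⟩
  have hFinj : Function.Injective F := by
    rintro ⟨p, hp⟩ ⟨p', hp'⟩ hF
    have heq : imgof d p.parts = imgof d p'.parts := congrArg (fun z => z.1.parts) hF
    have hs := (img_spec hd63 (hQP p hp) p.parts_sum hexc).2.1
    have hs' := (img_spec hd63 (hQP p' hp') p'.parts_sum hexc).2.1
    rw [heq, hs'] at hs
    have e1 : p'.parts.count 1 = p.parts.count 1 := congrArg (fun z => z.1) hs
    have e2 : p'.parts.count d = p.parts.count d := congrArg (fun z => z.2.1) hs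
    have e3 : restof d p'.parts = restof d p.parts := congrArg (fun z => z.2.2) hs
    have : p.parts = p'.parts := by
      rw [decomp hd63 (s := p.parts), decomp hd63 (s := p'.parts), e1, e2, e3]
    exact Subtype.ext (Nat.Partition.ext this)
  exact Nat.card_le_card_of_injective F hFinj
end

section
/- Let d > 127 with d not of the form 2^r − 1 for any integer r, and set r = ⌊log₂(d+1)⌋. Then for all integers n ≥ 4d + 2^r, g_d(n) ≥ Q_{d−2}^{(1)}(n). -/
open Multiset

namespace GdQ

noncomputable section

/-- `r` in the paper. -/
def RR (d : ℕ) : ℕ := Nat.log 2 (d + 1)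

/-- Map on individual parts `x ≡ ±1 (mod d+1)`, `x ≠ 1, d`. -/
def bmap (d x : ℕ) : ℕ :=
  if (x + 1) % (d + 1) = 0 then
    (if ((x + 1) / (d + 1)) % 2 = 0 then ((x + 1) / (d + 1)) * d + 1
     else ((x + 1) / (d + 1)) * d + 2)
  else
    (if x / (d + 1) = 1 then d + 2
     else if (x / (d + 1)) % 2 = 1 then (x / (d + 1)) * d + 4
     else (x / (d + 1) - 1) * d + 8)

/-- Inverse of `bmap`. -/
def binv (d y : ℕ) : ℕ :=
  if y % (2 * d) = 1 then y + y / d - 2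
  else if y = d + 2 then d + 2
  else if y % (2 * d) = d + 8 then y + d + y / d - 6
  else y + y / d - 3

/-- Code used when exactly one part equals `d`: encodes the removed auxiliary part. -/
def ecode (d x : ℕ) : Multiset ℕ :=
  if (x + 1) % (d + 1) = 0 then
    (if ((x + 1) / (d + 1)) % 2 = 0 then {((x + 1) / (d + 1) - 1) * d + 16}
     else {((x + 1) / (d + 1) - 2) * d + 16, d + 16})
  else
    (if x / (d + 1) = 1 then 0
     else if (x / (d + 1)) % 2 = 0 then {(x / (d + 1) - 1) * d + 32}
     else {(x / (d + 1) - 2) * d + 32, d + 16})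

/-- Code for `m ≥ 2` parts equal to `d`. -/
def mcode (d m : ℕ) : Multiset ℕ :=
  if m % 2 = 0 then {(m - 1) * d + 32} else {(m - 2) * d + 32, d + 32}

def pick (μ : Multiset ℕ) (h : μ ≠ 0) : ℕ := (Multiset.exists_mem_of_ne_zero h).choose

lemma pick_mem (μ : Multiset ℕ) (h : μ ≠ 0) : pick μ h ∈ μ :=
  (Multiset.exists_mem_of_ne_zero h).choose_spec

/-- The core of the image partition (everything except padding 1's). -/
def core (d : ℕ) (M : Multiset ℕ) : Multiset ℕ :=
  let μ := M.filter (fun x => ¬(x = 1 ∨ x = d))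
  if M.count d = 0 then μ.map (bmap d)
  else if M.count d = 1 then
    (if h : μ = 0 then {d + 2 ^ (RR d - 1), 3 * d + 2 ^ (RR d - 1)}
     else (d + 2 ^ (RR d - 1)) ::ₘ
       (ecode d (pick μ h) + (μ.erase (pick μ h)).map (bmap d)))
  else μ.map (bmap d) + mcode d (M.count d)

/-- Decoder. -/
def decode (d : ℕ) (N : Multiset ℕ) : Multiset ℕ :=
  let FC := N.filter (fun y => y % (2 * d) = d + 2 ^ (RR d - 1))
  let F32 := N.filter (fun y => y % (2 * d) = d + 32)
  let WE := ((N.filter (fun y => y % (2 * d) = d + 16 ∨ y % (2 * d) = d + 32)).map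
      (fun y => y / d)).sum
  let B := (N.filter (fun y => ¬y = 1 ∧ (y % (2 * d) = 1 ∨ y % (2 * d) = d + 2 ∨
      y % (2 * d) = d + 4 ∨ y % (2 * d) = d + 8))).map (binv d)
  if 2 ≤ FC.card then {d}
  else if FC.card = 1 then
    (d ::ₘ B) + {(if WE = 0 then d + 2
      else if F32 = 0 then (WE + 1) * (d + 1) - 1 else (WE + 1) * (d + 1) + 1)}
  else (replicate (if F32 = 0 then 0 else
      ((F32.map (fun y => y / d)).sum + 1)) d) + B

/-- Canonical form of a part `≡ ±1 (mod d+1)` other than `1` and `d`. -/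
def AForm (d x : ℕ) : Prop :=
  (∃ k, 2 ≤ k ∧ x + 1 = k * (d + 1)) ∨ (∃ k, 1 ≤ k ∧ x = k * (d + 1) + 1)

lemma aform_of {d x : ℕ} (hd : 2 ≤ d)
    (hx : x % (d + 1) = 1 ∨ (x + 1) % (d + 1) = 0) (h1 : x ≠ 1) (hdd : x ≠ d) :
    AForm d x := by
  rcases hx with hx | hx
  · right
    have h2 := Nat.div_add_mod x (d + 1)
    rw [hx] at h2
    generalize hq : x / (d + 1) = q at h2
    have h3 : (d + 1) * q = q * (d + 1) := Nat.mul_comm _ _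
    set K := q * (d + 1) with hK
    refine ⟨q, ?_, by omega⟩
    rcases Nat.eq_zero_or_pos q with h | h
    · exfalso; apply h1; rw [h] at h2; simp at h2; omega
    · exact h
  · left
    have h2 := Nat.div_add_mod (x + 1) (d + 1)
    rw [hx] at h2
    generalize hq : (x + 1) / (d + 1) = q at h2
    have h3 : (d + 1) * q = q * (d + 1) := Nat.mul_comm _ _
    set K := q * (d + 1) with hK
    refine ⟨q, ?_, by omega⟩
    rcases Nat.lt_or_ge q 2 with h | h
    · exfalso
      have h4 : q = 0 ∨ q = 1 := by omega
      rcases h4 with h4 | h4 <;> rw [h4] at h2 <;> simp at h2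
      apply hdd; omega
    · exact h

lemma div_helper {d : ℕ} (hd : 0 < d) (c s : ℕ) (hs : s < d) : (c * d + s) / d = c := by
  rw [Nat.add_div_of_dvd_right ⟨c, by ring⟩ ]
  rw [Nat.mul_div_cancel _ hd, Nat.div_eq_of_lt hs]
  omega

lemma mod_helper {d : ℕ} (c s : ℕ) (hs : s < 2 * d) : (c * (2 * d) + s) % (2 * d) = s := by
  rw [Nat.add_comm, Nat.add_mul_mod_self_right, Nat.mod_eq_of_lt hs]

lemma minus_eval {d k x : ℕ} (hd : 2 ≤ d) (hk : 2 ≤ k) (hx : x + 1 = k * (d + 1)) :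
    (x + 1) % (d + 1) = 0 ∧ (x + 1) / (d + 1) = k := by
  constructor
  · rw [hx]; exact Nat.mul_mod_left _ _
  · rw [hx]; exact Nat.mul_div_cancel _ (by omega)

lemma plus_eval {d k x : ℕ} (hd : 2 ≤ d) (hk : 1 ≤ k) (hx : x = k * (d + 1) + 1) :
    ¬((x + 1) % (d + 1) = 0) ∧ x / (d + 1) = k := by
  have hx2 : x + 1 = k * (d + 1) + 2 := by omega
  have hx4 : x + 1 = (d + 1) * k + 2 := by rw [hx]; ring
  constructor
  · rw [hx4, Nat.mul_add_mod, Nat.mod_eq_of_lt (by omega)]; omega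
  · have hx3 : x = (d + 1) * k + 1 := by rw [hx]; ring
    rw [hx3, Nat.mul_add_div (by omega), Nat.div_eq_of_lt (by omega)]
    omega

lemma bmap_eval_minus {d k x : ℕ} (hd : 2 ≤ d) (hk : 2 ≤ k) (hx : x + 1 = k * (d + 1)) :
    bmap d x = if k % 2 = 0 then k * d + 1 else k * d + 2 := by
  obtain ⟨h0, h1⟩ := minus_eval hd hk hx
  unfold bmap; rw [h1, if_pos h0]

lemma bmap_eval_plus {d k x : ℕ} (hd : 2 ≤ d) (hk : 1 ≤ k) (hx : x = k * (d + 1) + 1) :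
    bmap d x = if k = 1 then d + 2 else if k % 2 = 1 then k * d + 4 else (k - 1) * d + 8 := by
  obtain ⟨h0, h1⟩ := plus_eval hd hk hx
  unfold bmap; rw [h1, if_neg h0]

lemma ecode_eval_minus {d k x : ℕ} (hd : 2 ≤ d) (hk : 2 ≤ k) (hx : x + 1 = k * (d + 1)) :
    ecode d x = if k % 2 = 0 then {(k - 1) * d + 16} else ({(k - 2) * d + 16, d + 16} : Multiset ℕ) := by
  obtain ⟨h0, h1⟩ := minus_eval hd hk hx
  unfold ecode; rw [h1, if_pos h0]

lemma ecode_eval_plus {d k x : ℕ} (hd : 2 ≤ d) (hk : 1 ≤ k) (hx : x = k * (d + 1) + 1) :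
    ecode d x = if k = 1 then 0
      else if k % 2 = 0 then {(k - 1) * d + 32} else ({(k - 2) * d + 32, d + 16} : Multiset ℕ) := by
  obtain ⟨h0, h1⟩ := plus_eval hd hk hx
  unfold ecode; rw [h1, if_neg h0]

lemma bmap_good {d x : ℕ} (hd : 127 < d) (hx : AForm d x) :
    bmap d x ≤ x ∧ binv d (bmap d x) = x ∧ 1 < bmap d x ∧
    (bmap d x % (2 * d) = 1 ∨ bmap d x % (2 * d) = d + 2 ∨ bmap d x % (2 * d) = d + 4 ∨
      bmap d x % (2 * d) = d + 8) := by
  have hd2 : 2 ≤ d := by omega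
  have hd0 : 0 < d := by omega
  rcases hx with ⟨k, hk, hxk⟩ | ⟨k, hk, hxk⟩
  · -- minus case : x = k(d+1) - 1
    rcases Nat.mod_two_eq_zero_or_one k with hp | hp
    · -- k even, k = 2j+2
      obtain ⟨j, rfl⟩ : ∃ j, k = 2 * j + 2 := ⟨(k - 2) / 2, by omega⟩
      have hb : bmap d x = (2 * j + 2) * d + 1 := by
        rw [bmap_eval_minus hd2 hk hxk, if_pos hp]
      have hx2 : x + 1 = 2 * (j * d) + 2 * d + 2 * j + 2 := by rw [hxk]; ring
      have hb2 : bmap d x = 2 * (j * d) + 2 * d + 1 := by rw [hb]; ring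
      have hres : bmap d x % (2 * d) = 1 := by
        have e : (2 * j + 2) * d + 1 = (j + 1) * (2 * d) + 1 := by ring
        rw [hb, e, mod_helper _ _ (by omega)]
      refine ⟨by omega, ?_, by omega, Or.inl hres⟩
      unfold binv
      rw [if_pos hres, hb]
      rw [div_helper hd0 _ _ (by omega)]
      have e2 : (2 * j + 2) * d = 2 * (j * d) + 2 * d := by ring
      omega
    · -- k odd, k = 2j+3
      obtain ⟨j, rfl⟩ : ∃ j, k = 2 * j + 3 := ⟨(k - 3) / 2, by omega⟩
      have hb : bmap d x = (2 * j + 3) * d + 2 := by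
        rw [bmap_eval_minus hd2 hk hxk, if_neg (by omega)]
      have hx2 : x + 1 = 2 * (j * d) + 3 * d + 2 * j + 3 := by rw [hxk]; ring
      have hb2 : bmap d x = 2 * (j * d) + 3 * d + 2 := by rw [hb]; ring
      have hres : bmap d x % (2 * d) = d + 2 := by
        have e : (2 * j + 3) * d + 2 = (j + 1) * (2 * d) + (d + 2) := by ring
        rw [hb, e, mod_helper _ _ (by omega)]
      refine ⟨by omega, ?_, by omega, Or.inr (Or.inl hres)⟩
      unfold binv
      rw [if_neg (by omega), if_neg (by omega), if_neg (by rw [hres]; omega), hb]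
      rw [div_helper hd0 _ _ (by omega)]
      have e2 : (2 * j + 3) * d = 2 * (j * d) + 3 * d := by ring
      omega
  · -- plus case : x = k(d+1)+1
    by_cases hk1 : k = 1
    · subst hk1
      have hb : bmap d x = d + 2 := by rw [bmap_eval_plus hd2 hk hxk, if_pos rfl]
      have hx2 : x = d + 2 := by omega
      have hres : bmap d x % (2 * d) = d + 2 := by rw [hb, Nat.mod_eq_of_lt (by omega)]
      refine ⟨by omega, ?_, by omega, Or.inr (Or.inl hres)⟩
      unfold binv
      rw [if_neg (by omega), if_pos (by rw [hb]), hx2]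
    rcases Nat.mod_two_eq_zero_or_one k with hp | hp
    · -- k even ≥ 2, k = 2j+2
      obtain ⟨j, rfl⟩ : ∃ j, k = 2 * j + 2 := ⟨(k - 2) / 2, by omega⟩
      have hb : bmap d x = (2 * j + 1) * d + 8 := by
        rw [bmap_eval_plus hd2 hk hxk, if_neg hk1, if_neg (by omega)]
        norm_num
      have hx2 : x = 2 * (j * d) + 2 * d + 2 * j + 3 := by rw [hxk]; ring
      have hb2 : bmap d x = 2 * (j * d) + d + 8 := by rw [hb]; ring
      have hres : bmap d x % (2 * d) = d + 8 := by
        have e : (2 * j + 1) * d + 8 = j * (2 * d) + (d + 8) := by ring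
        rw [hb, e, mod_helper _ _ (by omega)]
      refine ⟨by omega, ?_, by omega, Or.inr (Or.inr (Or.inr hres))⟩
      unfold binv
      rw [if_neg (by omega), if_neg (by omega), if_pos hres, hb]
      rw [div_helper hd0 _ _ (by omega)]
      omega
    · -- k odd ≥ 3, k = 2j+3
      obtain ⟨j, rfl⟩ : ∃ j, k = 2 * j + 3 := ⟨(k - 3) / 2, by omega⟩
      have hb : bmap d x = (2 * j + 3) * d + 4 := by
        rw [bmap_eval_plus hd2 hk hxk, if_neg hk1, if_pos hp]
      have hx2 : x = 2 * (j * d) + 3 * d + 2 * j + 4 := by rw [hxk]; ring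
      have hb2 : bmap d x = 2 * (j * d) + 3 * d + 4 := by rw [hb]; ring
      have hres : bmap d x % (2 * d) = d + 4 := by
        have e : (2 * j + 3) * d + 4 = (j + 1) * (2 * d) + (d + 4) := by ring
        rw [hb, e, mod_helper _ _ (by omega)]
      refine ⟨by omega, ?_, by omega, Or.inr (Or.inr (Or.inl hres))⟩
      unfold binv
      rw [if_neg (by omega), if_neg (by omega), if_neg (by rw [hres]; omega), hb]
      rw [div_helper hd0 _ _ (by omega)]
      have e2 : (2 * j + 3) * d = 2 * (j * d) + 3 * d := by ring
      omega

lemma ecode_spec_minus {d k x e2 : ℕ} (hd : 127 < d) (hpw : e2 + 64 ≤ d)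
    (hk : 2 ≤ k) (hx : x + 1 = k * (d + 1)) :
    (∀ y ∈ ecode d x, y % (2 * d) = d + 16) ∧
    e2 + (ecode d x).sum + d ≤ x + d ∧
    ((ecode d x).map (fun y => y / d)).sum + 1 = k := by
  have hd2 : 2 ≤ d := by omega
  rcases Nat.mod_two_eq_zero_or_one k with hp | hp
  · obtain ⟨j, rfl⟩ : ∃ j, k = 2 * j + 2 := ⟨(k - 2) / 2, by omega⟩
    have he : ecode d x = {(2 * j + 1) * d + 16} := by
      rw [ecode_eval_minus hd2 hk hx, if_pos hp]
      have e : 2 * j + 2 - 1 = 2 * j + 1 := by omega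
      rw [e]
    have hx2 : x + 1 = 2 * (j * d) + 2 * d + 2 * j + 2 := by rw [hx]; ring
    have hres : ((2 * j + 1) * d + 16) % (2 * d) = d + 16 := by
      have e : (2 * j + 1) * d + 16 = j * (2 * d) + (d + 16) := by ring
      rw [e, mod_helper _ _ (by omega)]
    have hsum : ((2 * j + 1) * d + 16) = 2 * (j * d) + d + 16 := by ring
    refine ⟨?_, ?_, ?_⟩
    · intro y hy; rw [he, mem_singleton] at hy; rw [hy]; exact hres
    · rw [he, sum_singleton]; omega
    · rw [he, map_singleton, sum_singleton, div_helper (by omega) _ _ (by omega)]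
  · obtain ⟨j, rfl⟩ : ∃ j, k = 2 * j + 3 := ⟨(k - 3) / 2, by omega⟩
    have he : ecode d x = {(2 * j + 1) * d + 16, d + 16} := by
      rw [ecode_eval_minus hd2 hk hx, if_neg (by omega)]
      have e : 2 * j + 3 - 2 = 2 * j + 1 := by omega
      rw [e]
    have hx2 : x + 1 = 2 * (j * d) + 3 * d + 2 * j + 3 := by rw [hx]; ring
    have hres1 : ((2 * j + 1) * d + 16) % (2 * d) = d + 16 := by
      have e : (2 * j + 1) * d + 16 = j * (2 * d) + (d + 16) := by ring
      rw [e, mod_helper _ _ (by omega)]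
    have hres2 : (d + 16) % (2 * d) = d + 16 := Nat.mod_eq_of_lt (by omega)
    have hsum : ((2 * j + 1) * d + 16) = 2 * (j * d) + d + 16 := by ring
    refine ⟨?_, ?_, ?_⟩
    · intro y hy
      rw [he, insert_eq_cons] at hy
      rcases mem_cons.mp hy with h | h
      · rw [h]; exact hres1
      · rw [mem_singleton.mp h]; exact hres2
    · rw [he]; simp only [insert_eq_cons, sum_cons, sum_singleton]; omega
    · rw [he]; simp only [insert_eq_cons, map_cons, map_singleton, sum_cons, sum_singleton]
      rw [div_helper (by omega) _ _ (by omega)]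
      have : (d + 16) / d = 1 := by
        have e : d + 16 = 1 * d + 16 := by ring
        rw [e, div_helper (by omega) _ _ (by omega)]
      rw [this]

lemma ecode_spec_plus {d k x e2 : ℕ} (hd : 127 < d) (hpw : e2 + 64 ≤ d)
    (hk : 1 ≤ k) (hx : x = k * (d + 1) + 1) :
    (∀ y ∈ ecode d x, y % (2 * d) = d + 16 ∨ y % (2 * d) = d + 32) ∧
    e2 + (ecode d x).sum + d ≤ x + d ∧
    ((ecode d x).map (fun y => y / d)).sum + 1 = k ∧
    (2 ≤ k → ∃ y ∈ ecode d x, y % (2 * d) = d + 32) ∧ (k = 1 → ecode d x = 0) := by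
  have hd2 : 2 ≤ d := by omega
  by_cases hk1 : k = 1
  · subst hk1
    have he : ecode d x = 0 := by rw [ecode_eval_plus hd2 hk hx, if_pos rfl]
    refine ⟨?_, ?_, ?_, by omega, fun _ => he⟩
    · intro y hy; rw [he] at hy; simp at hy
    · rw [he, sum_zero]; omega
    · rw [he]; simp
  rcases Nat.mod_two_eq_zero_or_one k with hp | hp
  · obtain ⟨j, rfl⟩ : ∃ j, k = 2 * j + 2 := ⟨(k - 2) / 2, by omega⟩
    have he : ecode d x = {(2 * j + 1) * d + 32} := by
      rw [ecode_eval_plus hd2 hk hx, if_neg hk1, if_pos hp]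
      have e : 2 * j + 2 - 1 = 2 * j + 1 := by omega
      rw [e]
    have hx2 : x = 2 * (j * d) + 2 * d + 2 * j + 3 := by rw [hx]; ring
    have hres : ((2 * j + 1) * d + 32) % (2 * d) = d + 32 := by
      have e : (2 * j + 1) * d + 32 = j * (2 * d) + (d + 32) := by ring
      rw [e, mod_helper _ _ (by omega)]
    have hsum : ((2 * j + 1) * d + 32) = 2 * (j * d) + d + 32 := by ring
    refine ⟨?_, ?_, ?_, ?_, by omega⟩
    · intro y hy; rw [he, mem_singleton] at hy; rw [hy]; right; exact hres
    · rw [he, sum_singleton]; omega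
    · rw [he, map_singleton, sum_singleton, div_helper (by omega) _ _ (by omega)]
    · intro _; exact ⟨(2 * j + 1) * d + 32, by rw [he, mem_singleton], hres⟩
  · obtain ⟨j, rfl⟩ : ∃ j, k = 2 * j + 3 := ⟨(k - 3) / 2, by omega⟩
    have he : ecode d x = {(2 * j + 1) * d + 32, d + 16} := by
      rw [ecode_eval_plus hd2 hk hx, if_neg hk1, if_neg (by omega)]
      have e : 2 * j + 3 - 2 = 2 * j + 1 := by omega
      rw [e]
    have hx2 : x = 2 * (j * d) + 3 * d + 2 * j + 4 := by rw [hx]; ring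
    have hres1 : ((2 * j + 1) * d + 32) % (2 * d) = d + 32 := by
      have e : (2 * j + 1) * d + 32 = j * (2 * d) + (d + 32) := by ring
      rw [e, mod_helper _ _ (by omega)]
    have hres2 : (d + 16) % (2 * d) = d + 16 := Nat.mod_eq_of_lt (by omega)
    have hsum : ((2 * j + 1) * d + 32) = 2 * (j * d) + d + 32 := by ring
    refine ⟨?_, ?_, ?_, ?_, by omega⟩
    · intro y hy
      rw [he, insert_eq_cons] at hy
      rcases mem_cons.mp hy with h | h
      · rw [h]; right; exact hres1
      · rw [mem_singleton.mp h]; left; exact hres2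
    · rw [he]; simp only [insert_eq_cons, sum_cons, sum_singleton]; omega
    · rw [he]; simp only [insert_eq_cons, map_cons, map_singleton, sum_cons, sum_singleton]
      rw [div_helper (by omega) _ _ (by omega)]
      have : (d + 16) / d = 1 := by
        have e : d + 16 = 1 * d + 16 := by ring
        rw [e, div_helper (by omega) _ _ (by omega)]
      rw [this]
    · intro _
      exact ⟨(2 * j + 1) * d + 32, by rw [he, insert_eq_cons]; exact mem_cons_self _ _, hres1⟩

lemma mcode_spec {d m : ℕ} (hd : 127 < d) (hm : 2 ≤ m) :
    (mcode d m).sum ≤ m * d ∧ (∀ y ∈ mcode d m, y % (2 * d) = d + 32) ∧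
    ((mcode d m).map (fun y => y / d)).sum + 1 = m ∧ mcode d m ≠ 0 := by
  rcases Nat.mod_two_eq_zero_or_one m with hp | hp
  · obtain ⟨j, rfl⟩ : ∃ j, m = 2 * j + 2 := ⟨(m - 2) / 2, by omega⟩
    have he : mcode d (2 * j + 2) = {(2 * j + 1) * d + 32} := by
      unfold mcode; rw [if_pos hp]
      have e : 2 * j + 2 - 1 = 2 * j + 1 := by omega
      rw [e]
    have hres : ((2 * j + 1) * d + 32) % (2 * d) = d + 32 := by
      have e : (2 * j + 1) * d + 32 = j * (2 * d) + (d + 32) := by ring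
      rw [e, mod_helper _ _ (by omega)]
    have hsum : ((2 * j + 1) * d + 32) = 2 * (j * d) + d + 32 := by ring
    have hmd : (2 * j + 2) * d = 2 * (j * d) + 2 * d := by ring
    refine ⟨?_, ?_, ?_, ?_⟩
    · rw [he, sum_singleton]; omega
    · intro y hy; rw [he, mem_singleton] at hy; rw [hy]; exact hres
    · rw [he, map_singleton, sum_singleton, div_helper (by omega) _ _ (by omega)]
    · rw [he]; exact (singleton_ne_zero _)
  · obtain ⟨j, rfl⟩ : ∃ j, m = 2 * j + 3 := ⟨(m - 3) / 2, by omega⟩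
    have he : mcode d (2 * j + 3) = {(2 * j + 1) * d + 32, d + 32} := by
      unfold mcode; rw [if_neg (by omega)]
      have e : 2 * j + 3 - 2 = 2 * j + 1 := by omega
      rw [e]
    have hres1 : ((2 * j + 1) * d + 32) % (2 * d) = d + 32 := by
      have e : (2 * j + 1) * d + 32 = j * (2 * d) + (d + 32) := by ring
      rw [e, mod_helper _ _ (by omega)]
    have hres2 : (d + 32) % (2 * d) = d + 32 := Nat.mod_eq_of_lt (by omega)
    have hsum : ((2 * j + 1) * d + 32) = 2 * (j * d) + d + 32 := by ring
    have hmd : (2 * j + 3) * d = 2 * (j * d) + 3 * d := by ring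
    refine ⟨?_, ?_, ?_, ?_⟩
    · rw [he]; simp only [insert_eq_cons, sum_cons, sum_singleton]; omega
    · intro y hy
      rw [he, insert_eq_cons] at hy
      rcases mem_cons.mp hy with h | h
      · rw [h]; exact hres1
      · rw [mem_singleton.mp h]; exact hres2
    · rw [he]; simp only [insert_eq_cons, map_cons, map_singleton, sum_cons, sum_singleton]
      rw [div_helper (by omega) _ _ (by omega)]
      have : (d + 32) / d = 1 := by
        have e : d + 32 = 1 * d + 32 := by ring
        rw [e, div_helper (by omega) _ _ (by omega)]
      rw [this]
    · rw [he]; exact (cons_ne_zero)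

lemma base_facts {d : ℕ} (hd : 127 < d) (h2r : 2 ^ RR d ≤ d) :
    7 ≤ RR d ∧ 2 ^ (RR d - 1) + 64 ≤ d ∧ 64 ≤ 2 ^ (RR d - 1) ∧
    2 ^ (RR d - 1) + 2 ^ (RR d - 1) = 2 ^ RR d := by
  have h7 : 7 ≤ RR d := by
    have : (2 : ℕ) ^ 7 ≤ d + 1 := by norm_num; omega
    exact (Nat.le_log_iff_pow_le (by norm_num) (by omega)).mpr this
  have hhalf : 2 ^ (RR d - 1) + 2 ^ (RR d - 1) = 2 ^ RR d := by
    have e : RR d - 1 + 1 = RR d := by omega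
    calc 2 ^ (RR d - 1) + 2 ^ (RR d - 1) = 2 ^ (RR d - 1) * 2 := by ring
    _ = 2 ^ (RR d - 1 + 1) := (pow_succ 2 _).symm
    _ = 2 ^ RR d := by rw [e]
  have h64 : 64 ≤ 2 ^ (RR d - 1) := by
    have : (2 : ℕ) ^ 6 ≤ 2 ^ (RR d - 1) := Nat.pow_le_pow_right (by norm_num) (by omega)
    norm_num at this; exact this
  exact ⟨h7, by omega, h64, hhalf⟩

lemma sum_map_bmap_le {d : ℕ} (hd : 127 < d) (μ : Multiset ℕ)
    (hμ : ∀ x ∈ μ, AForm d x) : (μ.map (bmap d)).sum ≤ μ.sum := by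
  have h := sum_map_le_sum_map (s := μ) (bmap d) id
    (fun x hx => (bmap_good hd (hμ x hx)).1)
  rwa [map_id] at h

lemma M_decomp {d : ℕ} (hd1 : d ≠ 1) (M : Multiset ℕ) :
    M = replicate (M.count 1) 1 + replicate (M.count d) d +
      M.filter (fun x => ¬(x = 1 ∨ x = d)) := by
  have h0 := filter_add_not (fun x => (x = 1 ∨ x = d)) M
  have h1 := filter_add_filter (fun x => x = 1) (fun x => x = d) M
  have h2 : M.filter (fun x => x = 1 ∧ x = d) = 0 := by
    refine filter_eq_nil.mpr (fun a _ h => ?_)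
    exact hd1 (by omega)
  rw [h2, add_zero] at h1
  calc M = M.filter (fun x => x = 1 ∨ x = d) +
        M.filter (fun x => ¬(x = 1 ∨ x = d)) := h0.symm
    _ = (M.filter (fun x => x = 1) + M.filter (fun x => x = d)) +
        M.filter (fun x => ¬(x = 1 ∨ x = d)) := by rw [h1]
    _ = _ := by rw [filter_eq', filter_eq']

lemma filter_map_all {P : ℕ → Prop} [DecidablePred P] (s : Multiset ℕ) (f : ℕ → ℕ)
    (h : ∀ x ∈ s, P (f x)) : filter P (map f s) = map f s :=
  filter_eq_self.mpr (by intro y hy; obtain ⟨x, hx, rfl⟩ := mem_map.mp hy; exact h x hx)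

lemma filter_map_none {P : ℕ → Prop} [DecidablePred P] (s : Multiset ℕ) (f : ℕ → ℕ)
    (h : ∀ x ∈ s, ¬P (f x)) : filter P (map f s) = 0 :=
  filter_eq_nil.mpr (by intro y hy; obtain ⟨x, hx, rfl⟩ := mem_map.mp hy; exact h x hx)

lemma filter_replicate_one {P : ℕ → Prop} [DecidablePred P] (z : ℕ) (h : ¬P 1) :
    filter P (replicate z (1 : ℕ)) = 0 :=
  filter_eq_nil.mpr (by intro y hy; rw [eq_of_mem_replicate hy]; exact h)

lemma decode_core {d : ℕ} (hd : 127 < d) (h2r : 2 ^ RR d ≤ d)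
    (M : Multiset ℕ) (hM : ∀ x ∈ M, x = 1 ∨ x = d ∨ AForm d x) (z : ℕ) :
    decode d (core d M + replicate z 1) =
      replicate (M.count d) d + M.filter (fun x => ¬(x = 1 ∨ x = d)) := by
  obtain ⟨h7, hpw, h64, hhalf⟩ := base_facts hd h2r
  have hd0 : 0 < d := by omega
  have hAμ : ∀ x ∈ M.filter (fun x => ¬(x = 1 ∨ x = d)), AForm d x := by
    intro x hx
    obtain ⟨hxM, hx'⟩ := mem_filter.mp hx
    rcases hM x hxM with h | h | h
    · exact absurd (Or.inl h) hx'
    · exact absurd (Or.inr h) hx'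
    · exact h
  have hBspec : ∀ x, AForm d x →
      (¬ bmap d x % (2 * d) = d + 2 ^ (RR d - 1)) ∧
      (¬ bmap d x % (2 * d) = d + 32) ∧
      (¬ (bmap d x % (2 * d) = d + 16 ∨ bmap d x % (2 * d) = d + 32)) ∧
      (¬bmap d x = 1 ∧ (bmap d x % (2 * d) = 1 ∨ bmap d x % (2 * d) = d + 2 ∨
        bmap d x % (2 * d) = d + 4 ∨ bmap d x % (2 * d) = d + 8)) := by
    intro x hx
    obtain ⟨_, _, hgt, hres⟩ := bmap_good hd hx
    refine ⟨?_, ?_, ?_, by omega, hres⟩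
    · rcases hres with h | h | h | h <;> rw [h] <;> omega
    · rcases hres with h | h | h | h <;> rw [h] <;> omega
    · rcases hres with h | h | h | h <;> rw [h] <;> omega
  have h1res : (1 : ℕ) % (2 * d) = 1 := Nat.mod_eq_of_lt (by omega)
  have hc0res : (d + 2 ^ (RR d - 1)) % (2 * d) = d + 2 ^ (RR d - 1) :=
    Nat.mod_eq_of_lt (by omega)
  have hc1res : (3 * d + 2 ^ (RR d - 1)) % (2 * d) = d + 2 ^ (RR d - 1) := by
    have e : 3 * d + 2 ^ (RR d - 1) = 1 * (2 * d) + (d + 2 ^ (RR d - 1)) := by ring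
    rw [e, mod_helper _ _ (by omega)]
  have hbinvμ : ∀ (s : Multiset ℕ), (∀ x ∈ s, AForm d x) →
      (s.map (bmap d)).map (binv d) = s := by
    intro s hs
    rw [map_map]
    calc s.map (binv d ∘ bmap d) = s.map id :=
      map_congr rfl (fun x hx => (bmap_good hd (hs x hx)).2.1)
    _ = s := map_id s
  by_cases hm0 : M.count d = 0
  · -- no parts equal to d
    have hcore : core d M = (M.filter (fun x => ¬(x = 1 ∨ x = d))).map (bmap d) := by
      simp only [core]; rw [if_pos hm0]
    rw [hm0, hcore]
    set μ := M.filter (fun x => ¬(x = 1 ∨ x = d)) with hμ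
    have hFC : filter (fun y => y % (2 * d) = d + 2 ^ (RR d - 1))
        (μ.map (bmap d) + replicate z 1) = 0 := by
      rw [filter_add, filter_map_none _ _ (fun x hx => (hBspec x (hAμ x hx)).1),
        filter_replicate_one _ (by rw [h1res]; omega), add_zero]
    have hF32 : filter (fun y => y % (2 * d) = d + 32)
        (μ.map (bmap d) + replicate z 1) = 0 := by
      rw [filter_add, filter_map_none _ _ (fun x hx => (hBspec x (hAμ x hx)).2.1),
        filter_replicate_one _ (by rw [h1res]; omega), add_zero]
    have hFB : filter (fun y => ¬y = 1 ∧ (y % (2 * d) = 1 ∨ y % (2 * d) = d + 2 ∨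
        y % (2 * d) = d + 4 ∨ y % (2 * d) = d + 8)) (μ.map (bmap d) + replicate z 1)
        = μ.map (bmap d) := by
      rw [filter_add, filter_map_all _ _ (fun x hx => (hBspec x (hAμ x hx)).2.2.2),
        filter_replicate_one _ (by simp), add_zero]
    simp only [decode]
    rw [hFC, hF32, hFB]
    simp only [card_zero]
    rw [if_neg (by norm_num), if_neg (by norm_num)]
    simp [hbinvμ μ hAμ]
  by_cases hm1 : M.count d = 1
  · by_cases hz0 : M.filter (fun x => ¬(x = 1 ∨ x = d)) = 0
    · -- single d, nothing else
      have hcore : core d M = {d + 2 ^ (RR d - 1), 3 * d + 2 ^ (RR d - 1)} := by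
        simp only [core]; rw [if_neg hm0, if_pos hm1, dif_pos hz0]
      rw [hm1, hcore, hz0]
      have hFC : filter (fun y => y % (2 * d) = d + 2 ^ (RR d - 1))
          (({d + 2 ^ (RR d - 1), 3 * d + 2 ^ (RR d - 1)} : Multiset ℕ) + replicate z 1)
          = {d + 2 ^ (RR d - 1), 3 * d + 2 ^ (RR d - 1)} := by
        rw [filter_add, filter_replicate_one _ (by rw [h1res]; omega), add_zero]
        refine filter_eq_self.mpr ?_
        intro y hy
        rw [insert_eq_cons] at hy
        rcases mem_cons.mp hy with h | h
        · rw [h]; exact hc0res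
        · rw [mem_singleton.mp h]; exact hc1res
      simp only [decode]
      rw [hFC]
      rw [if_pos (by rw [insert_eq_cons, card_cons, card_singleton])]
      simp
    · -- single d, with companion part a₀
      set a0 := pick (M.filter (fun x => ¬(x = 1 ∨ x = d))) hz0 with ha0
      have ha0mem : a0 ∈ M.filter (fun x => ¬(x = 1 ∨ x = d)) := pick_mem _ hz0
      have ha0A : AForm d a0 := hAμ _ ha0mem
      have hcore : core d M = (d + 2 ^ (RR d - 1)) ::ₘ
          (ecode d a0 + (M.filter (fun x => ¬(x = 1 ∨ x = d)) |>.erase a0).map (bmap d)) := by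
        simp only [core]; rw [if_neg hm0, if_pos hm1, dif_neg hz0]
      rw [hm1, hcore]
      set μ' := (M.filter (fun x => ¬(x = 1 ∨ x = d))).erase a0 with hμ'
      have hAμ' : ∀ x ∈ μ', AForm d x := fun x hx => hAμ x (mem_of_mem_erase hx)
      -- ecode residue facts
      have hEres : ∀ y ∈ ecode d a0, y % (2 * d) = d + 16 ∨ y % (2 * d) = d + 32 := by
        rcases ha0A with ⟨k, hk, hxk⟩ | ⟨k, hk, hxk⟩
        · intro y hy
          exact Or.inl ((ecode_spec_minus (e2 := 2 ^ (RR d - 1)) hd (by omega) hk hxk).1 y hy)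
        · exact (ecode_spec_plus (e2 := 2 ^ (RR d - 1)) hd (by omega) hk hxk).1
      have hFC : filter (fun y => y % (2 * d) = d + 2 ^ (RR d - 1))
          ((d + 2 ^ (RR d - 1)) ::ₘ (ecode d a0 + μ'.map (bmap d)) + replicate z 1)
          = {d + 2 ^ (RR d - 1)} := by
        rw [filter_add, filter_cons, if_pos hc0res, filter_add,
          filter_eq_nil.mpr (fun y hy => by rcases hEres y hy with h | h <;> rw [h] <;> omega),
          filter_map_none _ _ (fun x hx => (hBspec x (hAμ' x hx)).1),
          filter_replicate_one _ (by rw [h1res]; omega)]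
        simp
      have hFE : filter (fun y => y % (2 * d) = d + 16 ∨ y % (2 * d) = d + 32)
          ((d + 2 ^ (RR d - 1)) ::ₘ (ecode d a0 + μ'.map (bmap d)) + replicate z 1)
          = ecode d a0 := by
        rw [filter_add, filter_cons, if_neg (by rw [hc0res]; omega), filter_add,
          filter_eq_self.mpr hEres,
          filter_map_none _ _ (fun x hx => (hBspec x (hAμ' x hx)).2.2.1),
          filter_replicate_one _ (by rw [h1res]; omega)]
        simp
      have hFB : filter (fun y => ¬y = 1 ∧ (y % (2 * d) = 1 ∨ y % (2 * d) = d + 2 ∨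
          y % (2 * d) = d + 4 ∨ y % (2 * d) = d + 8))
          ((d + 2 ^ (RR d - 1)) ::ₘ (ecode d a0 + μ'.map (bmap d)) + replicate z 1)
          = μ'.map (bmap d) := by
        rw [filter_add, filter_cons,
          if_neg (by rw [hc0res]; omega),
          filter_add,
          filter_eq_nil.mpr (fun y hy => by
            rcases hEres y hy with h | h <;> rw [h] <;> omega),
          filter_map_all _ _ (fun x hx => (hBspec x (hAμ' x hx)).2.2.2),
          filter_replicate_one _ (by simp)]
        simp
      simp only [decode]
      rw [hFC, hFE, hFB]
      rw [card_singleton, if_neg (by norm_num), if_pos rfl]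
      rw [hbinvμ μ' hAμ']
      -- identify the reconstructed a₀
      have hF32' : filter (fun y => y % (2 * d) = d + 32)
          ((d + 2 ^ (RR d - 1)) ::ₘ (ecode d a0 + μ'.map (bmap d)) + replicate z 1)
          = filter (fun y => y % (2 * d) = d + 32) (ecode d a0) := by
        rw [filter_add, filter_cons, if_neg (by rw [hc0res]; omega), filter_add,
          filter_map_none _ _ (fun x hx => (hBspec x (hAμ' x hx)).2.1),
          filter_replicate_one _ (by rw [h1res]; omega)]
        simp
      rw [hF32']
      have hrec : (if (((ecode d a0).map (fun y => y / d)).sum = 0) then d + 2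
          else if filter (fun y => y % (2 * d) = d + 32) (ecode d a0) = 0 then
            (((ecode d a0).map (fun y => y / d)).sum + 1) * (d + 1) - 1
          else (((ecode d a0).map (fun y => y / d)).sum + 1) * (d + 1) + 1) = a0 := by
        rcases ha0A with ⟨k, hk, hxk⟩ | ⟨k, hk, hxk⟩
        · obtain ⟨hr1, _, hW⟩ := ecode_spec_minus (e2 := 2 ^ (RR d - 1)) hd (by omega) hk hxk
          rw [if_neg (by omega)]
          rw [if_pos (filter_eq_nil.mpr (fun y hy => by rw [hr1 y hy]; omega))]
          rw [hW]
          set K := k * (d + 1) with hK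
          omega
        · obtain ⟨hr1, _, hW, h32, hE1⟩ :=
            ecode_spec_plus (e2 := 2 ^ (RR d - 1)) hd (by omega) hk hxk
          by_cases hk1 : k = 1
          · rw [if_pos (by rw [hE1 hk1]; simp)]
            rw [hxk, hk1]; ring
          · rw [if_neg (by omega)]
            rw [if_neg (by
              obtain ⟨y, hy, hyres⟩ := h32 (by omega)
              intro hcon
              have : y ∈ filter (fun y => y % (2 * d) = d + 32) (ecode d a0) :=
                mem_filter.mpr ⟨hy, hyres⟩
              rw [hcon] at this; simp at this)]
            rw [hW]
            set K := k * (d + 1) with hK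
            omega
      rw [hrec]
      -- final multiset juggling
      rw [← cons_erase ha0mem]
      rw [replicate_one, cons_add, add_comm μ' {a0}, singleton_add, ← singleton_add d]
  · -- at least two parts equal to d
    have hm2 : 2 ≤ M.count d := by omega
    have hcore : core d M = (M.filter (fun x => ¬(x = 1 ∨ x = d))).map (bmap d) +
        mcode d (M.count d) := by
      simp only [core]; rw [if_neg hm0, if_neg hm1]
    rw [hcore]
    set μ := M.filter (fun x => ¬(x = 1 ∨ x = d)) with hμ
    obtain ⟨hmsum, hmres, hmW, hmne⟩ := mcode_spec hd hm2
    have hFC : filter (fun y => y % (2 * d) = d + 2 ^ (RR d - 1))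
        (μ.map (bmap d) + mcode d (M.count d) + replicate z 1) = 0 := by
      rw [filter_add, filter_add, filter_map_none _ _ (fun x hx => (hBspec x (hAμ x hx)).1),
        filter_eq_nil.mpr (fun y hy => by rw [hmres y hy]; omega),
        filter_replicate_one _ (by rw [h1res]; omega)]
      simp
    have hF32 : filter (fun y => y % (2 * d) = d + 32)
        (μ.map (bmap d) + mcode d (M.count d) + replicate z 1) = mcode d (M.count d) := by
      rw [filter_add, filter_add, filter_map_none _ _ (fun x hx => (hBspec x (hAμ x hx)).2.1),
        filter_eq_self.mpr hmres, filter_replicate_one _ (by rw [h1res]; omega)]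
      simp
    have hFB : filter (fun y => ¬y = 1 ∧ (y % (2 * d) = 1 ∨ y % (2 * d) = d + 2 ∨
        y % (2 * d) = d + 4 ∨ y % (2 * d) = d + 8))
        (μ.map (bmap d) + mcode d (M.count d) + replicate z 1) = μ.map (bmap d) := by
      rw [filter_add, filter_add,
        filter_map_all _ _ (fun x hx => (hBspec x (hAμ x hx)).2.2.2),
        filter_eq_nil.mpr (fun y hy => by rw [hmres y hy]; omega),
        filter_replicate_one _ (by simp)]
      simp
    simp only [decode]
    rw [hFC, hF32, hFB]
    simp only [card_zero]
    simp only [show ¬ (2 ≤ 0) by norm_num, show ¬ ((0:ℕ) = 1) by norm_num, hmne, if_false]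
    rw [hmW, hbinvμ μ hAμ]

lemma sum_decomp {d : ℕ} (hd1 : d ≠ 1) (M : Multiset ℕ) :
    M.sum = M.count 1 * 1 + M.count d * d +
      (M.filter (fun x => ¬(x = 1 ∨ x = d))).sum := by
  conv_lhs => rw [M_decomp hd1 M]
  rw [sum_add, sum_add, sum_replicate, sum_replicate, smul_eq_mul, smul_eq_mul]

lemma core_good {d : ℕ} (hd : 127 < d) (h2r : 2 ^ RR d ≤ d)
    (M : Multiset ℕ) (hM : ∀ x ∈ M, x = 1 ∨ x = d ∨ AForm d x) :
    (∀ y ∈ core d M, 0 < y ∧ (y % (2 * d) = 1 ∨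
      (∃ j, 1 ≤ j ∧ j ≤ RR d - 2 ∧ y % (2 * d) = d + 2 ^ j) ∨
      y % (2 * d) = d + 2 ^ (RR d - 1))) ∧
    (∀ x : ℕ, x % (2 * d) = d + 2 ^ (RR d - 1) → (core d M).count x ≤ 1) ∧
    ((core d M).sum ≤ M.sum ∨ (core d M).sum = 4 * d + 2 ^ RR d) := by
  obtain ⟨h7, hpw, h64, hhalf⟩ := base_facts hd h2r
  have hd0 : 0 < d := by omega
  have hd1 : d ≠ 1 := by omega
  have hAμ : ∀ x ∈ M.filter (fun x => ¬(x = 1 ∨ x = d)), AForm d x := by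
    intro x hx
    obtain ⟨hxM, hx'⟩ := mem_filter.mp hx
    rcases hM x hxM with h | h | h
    · exact absurd (Or.inl h) hx'
    · exact absurd (Or.inr h) hx'
    · exact h
  have hMs := sum_decomp hd1 M
  have hc0res : (d + 2 ^ (RR d - 1)) % (2 * d) = d + 2 ^ (RR d - 1) :=
    Nat.mod_eq_of_lt (by omega)
  have hc1res : (3 * d + 2 ^ (RR d - 1)) % (2 * d) = d + 2 ^ (RR d - 1) := by
    have e : 3 * d + 2 ^ (RR d - 1) = 1 * (2 * d) + (d + 2 ^ (RR d - 1)) := by ring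
    rw [e, mod_helper _ _ (by omega)]
  -- good residues give the partition condition
  have hgB : ∀ x, AForm d x → 0 < bmap d x ∧ (bmap d x % (2 * d) = 1 ∨
      (∃ j, 1 ≤ j ∧ j ≤ RR d - 2 ∧ bmap d x % (2 * d) = d + 2 ^ j) ∨
      bmap d x % (2 * d) = d + 2 ^ (RR d - 1)) := by
    intro x hx
    obtain ⟨_, _, hgt, hres⟩ := bmap_good hd hx
    refine ⟨by omega, ?_⟩
    rcases hres with h | h | h | h
    · exact Or.inl h
    · exact Or.inr (Or.inl ⟨1, by omega, by omega, by rw [h]; norm_num⟩)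
    · exact Or.inr (Or.inl ⟨2, by omega, by omega, by rw [h]; norm_num⟩)
    · exact Or.inr (Or.inl ⟨3, by omega, by omega, by rw [h]; norm_num⟩)
  have hgE : ∀ y : ℕ, (y % (2 * d) = d + 16 ∨ y % (2 * d) = d + 32) →
      0 < y ∧ (y % (2 * d) = 1 ∨
      (∃ j, 1 ≤ j ∧ j ≤ RR d - 2 ∧ y % (2 * d) = d + 2 ^ j) ∨
      y % (2 * d) = d + 2 ^ (RR d - 1)) := by
    intro y hy
    have hypos : 0 < y := by
      rcases Nat.eq_zero_or_pos y with h | h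
      · exfalso; rw [h] at hy; simp [Nat.zero_mod] at hy
      · exact h
    refine ⟨hypos, Or.inr (Or.inl ?_)⟩
    rcases hy with h | h
    · exact ⟨4, by omega, by omega, by rw [h]; norm_num⟩
    · exact ⟨5, by omega, by omega, by rw [h]; norm_num⟩
  have hnB : ∀ (x : ℕ), x % (2 * d) = d + 2 ^ (RR d - 1) →
      ∀ s : Multiset ℕ, (∀ y ∈ s, AForm d y) → x ∉ s.map (bmap d) := by
    intro x hx s hs hmem
    obtain ⟨y, hy, hxy⟩ := mem_map.mp hmem
    obtain ⟨_, _, _, hres⟩ := bmap_good hd (hs y hy)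
    rw [hxy] at hres
    rcases hres with h | h | h | h <;> rw [h] at hx <;> omega
  by_cases hm0 : M.count d = 0
  · have hcore : core d M = (M.filter (fun x => ¬(x = 1 ∨ x = d))).map (bmap d) := by
      simp only [core]; rw [if_pos hm0]
    rw [hcore]
    refine ⟨?_, ?_, Or.inl ?_⟩
    · intro y hy
      obtain ⟨x, hx, rfl⟩ := mem_map.mp hy
      exact hgB x (hAμ x hx)
    · intro x hx
      rw [count_eq_zero.mpr (hnB x hx _ hAμ)]; omega
    · have h := sum_map_bmap_le hd _ hAμ
      omega
  by_cases hm1 : M.count d = 1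
  · by_cases hz0 : M.filter (fun x => ¬(x = 1 ∨ x = d)) = 0
    · have hcore : core d M = {d + 2 ^ (RR d - 1), 3 * d + 2 ^ (RR d - 1)} := by
        simp only [core]; rw [if_neg hm0, if_pos hm1, dif_pos hz0]
      rw [hcore]
      refine ⟨?_, ?_, Or.inr ?_⟩
      · intro y hy
        rw [insert_eq_cons] at hy
        rcases mem_cons.mp hy with h | h
        · subst h; exact ⟨by omega, Or.inr (Or.inr hc0res)⟩
        · rw [mem_singleton.mp h]; exact ⟨by omega, Or.inr (Or.inr hc1res)⟩
      · intro x hx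
        rw [insert_eq_cons, count_cons, count_singleton]
        split_ifs <;> omega
      · rw [insert_eq_cons, sum_cons, sum_singleton]; omega
    · set a0 := pick (M.filter (fun x => ¬(x = 1 ∨ x = d))) hz0 with ha0
      have ha0mem : a0 ∈ M.filter (fun x => ¬(x = 1 ∨ x = d)) := pick_mem _ hz0
      have ha0A : AForm d a0 := hAμ _ ha0mem
      have hcore : core d M = (d + 2 ^ (RR d - 1)) ::ₘ
          (ecode d a0 + (M.filter (fun x => ¬(x = 1 ∨ x = d)) |>.erase a0).map (bmap d)) := by
        simp only [core]; rw [if_neg hm0, if_pos hm1, dif_neg hz0]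
      rw [hcore]
      set μ' := (M.filter (fun x => ¬(x = 1 ∨ x = d))).erase a0 with hμ'
      have hAμ' : ∀ x ∈ μ', AForm d x := fun x hx => hAμ x (mem_of_mem_erase hx)
      have hEres : ∀ y ∈ ecode d a0, y % (2 * d) = d + 16 ∨ y % (2 * d) = d + 32 := by
        rcases ha0A with ⟨k, hk, hxk⟩ | ⟨k, hk, hxk⟩
        · intro y hy
          exact Or.inl ((ecode_spec_minus (e2 := 2 ^ (RR d - 1)) hd (by omega) hk hxk).1 y hy)
        · exact (ecode_spec_plus (e2 := 2 ^ (RR d - 1)) hd (by omega) hk hxk).1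
      have hEbudget : 2 ^ (RR d - 1) + (ecode d a0).sum + d ≤ a0 + d := by
        rcases ha0A with ⟨k, hk, hxk⟩ | ⟨k, hk, hxk⟩
        · exact (ecode_spec_minus (e2 := 2 ^ (RR d - 1)) hd (by omega) hk hxk).2.1
        · exact (ecode_spec_plus (e2 := 2 ^ (RR d - 1)) hd (by omega) hk hxk).2.1
      refine ⟨?_, ?_, Or.inl ?_⟩
      · intro y hy
        rcases mem_cons.mp hy with h | h
        · subst h; exact ⟨by omega, Or.inr (Or.inr hc0res)⟩
        · rcases mem_add.mp h with h' | h'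
          · exact hgE y (hEres y h')
          · obtain ⟨x, hx, rfl⟩ := mem_map.mp h'
            exact hgB x (hAμ' x hx)
      · intro x hx
        rw [count_cons, count_add]
        rw [count_eq_zero.mpr (hnB x hx _ hAμ')]
        rw [count_eq_zero.mpr (fun hmem => by
          rcases hEres x hmem with h | h <;> rw [h] at hx <;> omega)]
        split_ifs <;> omega
      · rw [sum_cons, sum_add]
        have hsb := sum_map_bmap_le hd μ' hAμ'
        have hμsum : (M.filter (fun x => ¬(x = 1 ∨ x = d))).sum = a0 + μ'.sum := by
          rw [hμ', ← sum_cons, cons_erase ha0mem]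
        rw [hm1] at hMs
        omega
  · have hm2 : 2 ≤ M.count d := by omega
    have hcore : core d M = (M.filter (fun x => ¬(x = 1 ∨ x = d))).map (bmap d) +
        mcode d (M.count d) := by
      simp only [core]; rw [if_neg hm0, if_neg hm1]
    rw [hcore]
    obtain ⟨hmsum, hmres, hmW, hmne⟩ := mcode_spec hd hm2
    refine ⟨?_, ?_, Or.inl ?_⟩
    · intro y hy
      rcases mem_add.mp hy with h' | h'
      · obtain ⟨x, hx, rfl⟩ := mem_map.mp h'
        exact hgB x (hAμ x hx)
      · have := hmres y h'
        have hypos : 0 < y := by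
          rcases Nat.eq_zero_or_pos y with h | h
          · exfalso; rw [h] at this; simp [Nat.zero_mod] at this
          · exact h
        exact ⟨hypos, Or.inr (Or.inl ⟨5, by omega, by omega, by rw [this]; norm_num⟩)⟩
    · intro x hx
      rw [count_add]
      rw [count_eq_zero.mpr (hnB x hx _ hAμ)]
      rw [count_eq_zero.mpr (fun hmem => by rw [hmres x hmem] at hx; omega)]
      omega
    · have h := sum_map_bmap_le hd _ hAμ
      rw [sum_add]
      omega

def gparts (d n : ℕ) (M : Multiset ℕ) : Multiset ℕ :=
  core d M + replicate (n - (core d M).sum) 1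

lemma core_sum_le {d n : ℕ} (hd : 127 < d) (h2r : 2 ^ RR d ≤ d)
    (hn : 4 * d + 2 ^ RR d ≤ n) (M : Multiset ℕ)
    (hM : ∀ x ∈ M, x = 1 ∨ x = d ∨ AForm d x) (hMsum : M.sum = n) :
    (core d M).sum ≤ n := by
  rcases (core_good hd h2r M hM).2.2 with h | h
  · omega
  · omega

lemma gparts_spec {d n : ℕ} (hd : 127 < d) (h2r : 2 ^ RR d ≤ d)
    (hn : 4 * d + 2 ^ RR d ≤ n) (M : Multiset ℕ)
    (hM : ∀ x ∈ M, x = 1 ∨ x = d ∨ AForm d x) (hMsum : M.sum = n) :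
    (∀ i ∈ gparts d n M, 0 < i) ∧ (gparts d n M).sum = n ∧
    (∀ x ∈ gparts d n M, x % (2 * d) = 1 ∨
      (∃ j, 1 ≤ j ∧ j ≤ RR d - 2 ∧ x % (2 * d) = d + 2 ^ j) ∨
      x % (2 * d) = d + 2 ^ (RR d - 1)) ∧
    (∀ x ∈ gparts d n M, x % (2 * d) = d + 2 ^ (RR d - 1) →
      (gparts d n M).count x ≤ 1) := by
  obtain ⟨h7, hpw, h64, hhalf⟩ := base_facts hd h2r
  obtain ⟨hg1, hg2, _⟩ := core_good hd h2r M hM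
  have hsle := core_sum_le hd h2r hn M hM hMsum
  have h1res : (1 : ℕ) % (2 * d) = 1 := Nat.mod_eq_of_lt (by omega)
  refine ⟨?_, ?_, ?_, ?_⟩
  · intro i hi
    rcases mem_add.mp hi with h | h
    · exact (hg1 i h).1
    · rw [eq_of_mem_replicate h]; omega
  · rw [gparts, sum_add, sum_replicate, smul_eq_mul, mul_one]; omega
  · intro x hx
    rcases mem_add.mp hx with h | h
    · exact (hg1 x h).2
    · rw [eq_of_mem_replicate h]; left; exact h1res
  · intro x _ hx
    have hx1 : x ≠ 1 := by intro h; rw [h, h1res] at hx; omega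
    rw [gparts, count_add, count_replicate, if_neg (fun h => hx1 h.symm)]
    have := hg2 x hx
    omega

lemma gparts_inj {d n : ℕ} (hd : 127 < d) (h2r : 2 ^ RR d ≤ d)
    (M N : Multiset ℕ)
    (hM : ∀ x ∈ M, x = 1 ∨ x = d ∨ AForm d x)
    (hN : ∀ x ∈ N, x = 1 ∨ x = d ∨ AForm d x)
    (hMsum : M.sum = n) (hNsum : N.sum = n)
    (h : gparts d n M = gparts d n N) : M = N := by
  have hd1 : d ≠ 1 := by omega
  have hdec := congrArg (decode d) h
  rw [gparts, gparts, decode_core hd h2r M hM _, decode_core hd h2r N hN _] at hdec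
  have hcnt : M.count d = N.count d := by
    have := congrArg (count d) hdec
    rw [count_add, count_add, count_replicate_self, count_replicate_self,
      count_filter_of_neg (by simp), count_filter_of_neg (by simp)] at this
    omega
  have hfil : M.filter (fun x => ¬(x = 1 ∨ x = d)) = N.filter (fun x => ¬(x = 1 ∨ x = d)) := by
    rw [hcnt] at hdec
    exact add_left_cancel hdec
  have e1 := sum_decomp hd1 M
  have e2 := sum_decomp hd1 N
  rw [hcnt, hfil] at e1
  have hcnt1 : M.count 1 = N.count 1 := by
    rw [hMsum] at e1; rw [hNsum] at e2
    set A := N.count d * d with hA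
    set B := (N.filter (fun x => ¬(x = 1 ∨ x = d))).sum with hB
    omega
  rw [M_decomp hd1 M, M_decomp hd1 N, hcnt, hcnt1, hfil]

end

end GdQ

/-- `gNum d n`: with `r = ⌊log₂ (d+1)⌋`, the number of partitions of `n` into parts
congruent to one of `1, d+2, d+4, d+8, …, d+2^(r-2)` modulo `2d`, in which additionally
parts congruent to `d + 2^(r-1)` modulo `2d` may appear, each such part at most once. -/
noncomputable def gNum (d n : ℕ) : ℕ :=
  Nat.card {p : n.Partition //
    (∀ x ∈ p.parts, x % (2 * d) = 1 ∨
      (∃ j, 1 ≤ j ∧ j ≤ Nat.log 2 (d + 1) - 2 ∧ x % (2 * d) = d + 2 ^ j) ∨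
      x % (2 * d) = d + 2 ^ (Nat.log 2 (d + 1) - 1)) ∧
    ∀ x ∈ p.parts, x % (2 * d) = d + 2 ^ (Nat.log 2 (d + 1) - 1) → p.parts.count x ≤ 1}

theorem g_dominates_Q (d n : ℕ) (hd : 127 < d) (hpow : ∀ r : ℕ, d ≠ 2 ^ r - 1)
    (hn : 4 * d + 2 ^ (Nat.log 2 (d + 1)) ≤ n) :
    QNum 1 (d - 2) n ≤ gNum d n := by
  classical
  have hRR : GdQ.RR d = Nat.log 2 (d + 1) := rfl
  have h2r : 2 ^ GdQ.RR d ≤ d := by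
    have h1 := Nat.pow_log_le_self 2 (show d + 1 ≠ 0 by omega)
    have h2 := hpow (Nat.log 2 (d + 1))
    rw [hRR]
    set P := 2 ^ Nat.log 2 (d + 1) with hP
    omega
  have hn' : 4 * d + 2 ^ GdQ.RR d ≤ n := by rw [hRR]; exact hn
  have hkey : ∀ p : n.Partition,
      (∀ x ∈ p.parts, x % (d - 2 + 3) = 1 % (d - 2 + 3) ∨ (x + 1) % (d - 2 + 3) = 0) →
      (∀ x ∈ p.parts, x = 1 ∨ x = d ∨ GdQ.AForm d x) := by
    intro p hp x hx
    have hmod : d - 2 + 3 = d + 1 := by omega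
    have h1 : (1 : ℕ) % (d + 1) = 1 := Nat.mod_eq_of_lt (by omega)
    have hx' : x % (d + 1) = 1 ∨ (x + 1) % (d + 1) = 0 := by
      have := hp x hx
      rw [hmod, h1] at this
      exact this
    by_cases he1 : x = 1
    · exact Or.inl he1
    by_cases hed : x = d
    · exact Or.inr (Or.inl hed)
    · exact Or.inr (Or.inr (GdQ.aform_of (by omega) hx' he1 hed))
  unfold QNum gNum
  refine Nat.card_le_card_of_injective
    (fun pp => ⟨⟨GdQ.gparts d n pp.val.parts,
      fun {i} hi => (GdQ.gparts_spec hd h2r hn' _ (hkey pp.val pp.prop)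
        pp.val.parts_sum).1 i hi,
      (GdQ.gparts_spec hd h2r hn' _ (hkey pp.val pp.prop) pp.val.parts_sum).2.1⟩,
      fun x hx => by
        have h := (GdQ.gparts_spec hd h2r hn' _ (hkey pp.val pp.prop)
          pp.val.parts_sum).2.2.1 x hx
        rw [hRR] at h
        exact h,
      fun x hx hres => by
        have h := (GdQ.gparts_spec hd h2r hn' _ (hkey pp.val pp.prop)
          pp.val.parts_sum).2.2.2 x hx
        rw [hRR] at h
        exact h hres⟩) ?_
  intro pp qq hpq
  have hparts : GdQ.gparts d n pp.val.parts = GdQ.gparts d n qq.val.parts :=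
    congrArg (fun w => w.val.parts) hpq
  have := GdQ.gparts_inj hd h2r pp.val.parts qq.val.parts
    (hkey pp.val pp.prop) (hkey qq.val qq.prop)
    pp.val.parts_sum qq.val.parts_sum hparts
  apply Subtype.ext
  exact Nat.Partition.ext this
end

section
/- Let d ≥ 4 be an even integer. Then for every positive integer n, Q_{d−1}^{(2)}(2n) ≥ Q_d^{(2)}(2n − 1). -/
namespace QShiftAux

/-- the "k-value" of a part `x ≡ ±2 mod m`. -/
def kk (m x : ℕ) : ℕ := if x % m = 2 then x / m else (x + 2) / m

/-- the image part: `m*k ± 2 ↦ (m-1)*k ± 2`. -/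
def ff (m x : ℕ) : ℕ := x - kk m x

/-- inverse of `ff` on good parts. -/
def gg (m y : ℕ) : ℕ :=
  if y % (m - 1) = 2 then m * (y / (m - 1)) + 2 else m * ((y + 2) / (m - 1)) - 2

def Kv (m : ℕ) (s : Multiset ℕ) : ℕ := (s.map (kk m)).sum

def newparts (m : ℕ) (s : Multiset ℕ) : Multiset ℕ :=
  s.map (ff m) + Multiset.replicate ((Kv m s + 1) / 2) 2

def Good (m : ℕ) (s : Multiset ℕ) : Prop :=
  ∀ x ∈ s, 0 < x ∧ (x % m = 2 % m ∨ (x + 2) % m = 0)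

lemma rep {m x : ℕ} (hm : 7 ≤ m) (hx0 : 0 < x)
    (hx : x % m = 2 % m ∨ (x + 2) % m = 0) :
    (∃ q, x = m * q + 2) ∨ (∃ q, 1 ≤ q ∧ x + 2 = m * q) := by
  rcases hx with h | h
  · left
    have h2 : 2 % m = 2 := Nat.mod_eq_of_lt (by omega)
    have h3 := Nat.div_add_mod x m
    exact ⟨x / m, by omega⟩
  · right
    obtain ⟨q, hq⟩ := Nat.dvd_of_mod_eq_zero h
    refine ⟨q, ?_, hq⟩
    rcases Nat.eq_zero_or_pos q with rfl | h1
    · omega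
    · exact h1

lemma kk_plus {m : ℕ} (hm : 6 ≤ m) (q : ℕ) : kk m (m * q + 2) = q := by
  have h2 : (m * q + 2) % m = 2 := by
    rw [Nat.mul_add_mod]; exact Nat.mod_eq_of_lt (by omega)
  have h3 : (m * q + 2) / m = q + 2 / m := Nat.mul_add_div (by omega) q 2
  have h4 : 2 / m = 0 := Nat.div_eq_of_lt (by omega)
  unfold kk
  rw [if_pos h2, h3, h4]
  omega

lemma minus_mod {m q x : ℕ} (hm : 6 ≤ m) (hq : 1 ≤ q) (hx : x + 2 = m * q) :
    x % m = m - 2 := by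
  have h1 : m * (q - 1) + m = m * q := by
    rw [← Nat.mul_succ]; congr 1; omega
  have hxe : x = m * (q - 1) + (m - 2) := by omega
  rw [hxe, Nat.mul_add_mod]
  exact Nat.mod_eq_of_lt (by omega)

lemma kk_minus {m q x : ℕ} (hm : 6 ≤ m) (hq : 1 ≤ q) (hx : x + 2 = m * q) :
    kk m x = q := by
  have h1 := minus_mod hm hq hx
  have h2 : (x + 2) / m = q := by rw [hx]; exact Nat.mul_div_cancel_left q (by omega)
  unfold kk
  rw [if_neg (by omega : ¬ x % m = 2)]
  exact h2

lemma mul_pred {m q : ℕ} (hm : 1 ≤ m) : (m - 1) * q + q = m * q := by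
  have : (m - 1) * q + 1 * q = ((m - 1) + 1) * q := (Nat.add_mul _ _ _).symm
  have h2 : m - 1 + 1 = m := by omega
  rw [h2] at this
  omega

lemma ff_plus {m : ℕ} (hm : 6 ≤ m) (q : ℕ) : ff m (m * q + 2) = (m - 1) * q + 2 := by
  have hk := kk_plus hm q
  have h1 := mul_pred (m := m) (q := q) (by omega)
  simp only [ff, hk]
  omega

lemma ff_minus {m q x : ℕ} (hm : 6 ≤ m) (hq : 1 ≤ q) (hx : x + 2 = m * q) :
    ff m x + 2 = (m - 1) * q := by
  have hk := kk_minus hm hq hx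
  have h1 := mul_pred (m := m) (q := q) (by omega)
  have h2 : 6 * q ≤ m * q := Nat.mul_le_mul_right q hm
  simp only [ff, hk]
  omega

lemma kk_le {m x : ℕ} (hm : 7 ≤ m) (hx0 : 0 < x)
    (hx : x % m = 2 % m ∨ (x + 2) % m = 0) : kk m x ≤ x := by
  rcases rep hm hx0 hx with ⟨q, rfl⟩ | ⟨q, hq, hxe⟩
  · have := kk_plus (by omega : 6 ≤ m) q
    have h2 : 7 * q ≤ m * q := Nat.mul_le_mul_right q hm
    omega
  · have := kk_minus (by omega : 6 ≤ m) hq hxe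
    have h2 : 7 * q ≤ m * q := Nat.mul_le_mul_right q hm
    omega

lemma gg_ff {m x : ℕ} (hm : 7 ≤ m) (hx0 : 0 < x)
    (hx : x % m = 2 % m ∨ (x + 2) % m = 0) : gg m (ff m x) = x := by
  rcases rep hm hx0 hx with ⟨q, rfl⟩ | ⟨q, hq, hxe⟩
  · rw [ff_plus (by omega) q]
    have h2 : ((m - 1) * q + 2) % (m - 1) = 2 := by
      rw [Nat.mul_add_mod]; exact Nat.mod_eq_of_lt (by omega)
    have h3 : ((m - 1) * q + 2) / (m - 1) = q + 2 / (m - 1) :=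
      Nat.mul_add_div (by omega) q 2
    have h4 : 2 / (m - 1) = 0 := Nat.div_eq_of_lt (by omega)
    unfold gg
    rw [if_pos h2, h3, h4]
    ring
  · have hfm := ff_minus (by omega : 6 ≤ m) hq hxe
    have h1 : ff m x % (m - 1) = (m - 1) - 2 := minus_mod (by omega) hq hfm
    have h2 : (ff m x + 2) / (m - 1) = q := by
      rw [hfm]; exact Nat.mul_div_cancel_left q (by omega)
    unfold gg
    rw [if_neg (by omega : ¬ ff m x % (m - 1) = 2), h2]
    omega

lemma kk'_ff {m x : ℕ} (hm : 7 ≤ m) (hx0 : 0 < x)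
    (hx : x % m = 2 % m ∨ (x + 2) % m = 0) : kk (m - 1) (ff m x) = kk m x := by
  rcases rep hm hx0 hx with ⟨q, rfl⟩ | ⟨q, hq, hxe⟩
  · rw [ff_plus (by omega) q, kk_plus (by omega) q, kk_plus (by omega) q]
  · have hfm := ff_minus (by omega : 6 ≤ m) hq hxe
    rw [kk_minus (by omega) hq hfm, kk_minus (by omega) hq hxe]

lemma kk'_two {m : ℕ} (hm : 7 ≤ m) : kk (m - 1) 2 = 0 := by
  have h2 : 2 % (m - 1) = 2 := Nat.mod_eq_of_lt (by omega)
  unfold kk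
  rw [if_pos h2]
  exact Nat.div_eq_of_lt (by omega)

lemma ff_pos {m x : ℕ} (hm : 7 ≤ m) (hx0 : 0 < x)
    (hx : x % m = 2 % m ∨ (x + 2) % m = 0) : 0 < ff m x := by
  rcases rep hm hx0 hx with ⟨q, rfl⟩ | ⟨q, hq, hxe⟩
  · rw [ff_plus (by omega) q]; omega
  · have hfm := ff_minus (by omega : 6 ≤ m) hq hxe
    have h2 : 6 * q ≤ (m - 1) * q := Nat.mul_le_mul_right q (by omega)
    omega

lemma ff_even {m x : ℕ} (hm : 7 ≤ m) (hmo : m % 2 = 1) (hx0 : 0 < x)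
    (hx : x % m = 2 % m ∨ (x + 2) % m = 0) : 2 ∣ ff m x := by
  have he : 2 ∣ (m - 1) := by omega
  rcases rep hm hx0 hx with ⟨q, rfl⟩ | ⟨q, hq, hxe⟩
  · rw [ff_plus (by omega) q]
    obtain ⟨t, ht⟩ := he.mul_right q
    exact ⟨t + 1, by omega⟩
  · have hfm := ff_minus (by omega : 6 ≤ m) hq hxe
    obtain ⟨t, ht⟩ := he.mul_right q
    have h2 : 6 * q ≤ (m - 1) * q := Nat.mul_le_mul_right q (by omega)
    exact ⟨t - 1, by omega⟩

lemma ff_cond {m x : ℕ} (hm : 7 ≤ m) (hx0 : 0 < x)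
    (hx : x % m = 2 % m ∨ (x + 2) % m = 0) :
    ff m x % (m - 1) = 2 % (m - 1) ∨ (ff m x + 2) % (m - 1) = 0 := by
  rcases rep hm hx0 hx with ⟨q, rfl⟩ | ⟨q, hq, hxe⟩
  · left
    rw [ff_plus (by omega) q, Nat.mul_add_mod]
  · right
    have hfm := ff_minus (by omega : 6 ≤ m) hq hxe
    rw [hfm]
    exact Nat.mul_mod_right _ _

lemma sum_ff_add_Kv {m : ℕ} (hm : 7 ≤ m) {s : Multiset ℕ} (hs : Good m s) :
    (s.map (ff m)).sum + Kv m s = s.sum := by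
  rw [Kv, ← Multiset.sum_map_add]
  have h1 : s.map (fun x => ff m x + kk m x) = s.map id := by
    apply Multiset.map_congr rfl
    intro x hx
    have h2 := kk_le hm (hs x hx).1 (hs x hx).2
    simp only [ff, id]
    omega
  rw [h1, Multiset.map_id]

lemma sum_newparts {m : ℕ} (hm : 7 ≤ m) (hmo : m % 2 = 1) {s : Multiset ℕ}
    (hs : Good m s) (ho : s.sum % 2 = 1) : (newparts m s).sum = s.sum + 1 := by
  have hse : 2 ∣ (s.map (ff m)).sum := by
    apply Multiset.dvd_sum
    intro y hy
    obtain ⟨x, hx, rfl⟩ := Multiset.mem_map.mp hy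
    exact ff_even hm hmo (hs x hx).1 (hs x hx).2
  have hsum := sum_ff_add_Kv hm hs
  rw [newparts, Multiset.sum_add, Multiset.sum_replicate, smul_eq_mul]
  omega

lemma pos_newparts {m : ℕ} (hm : 7 ≤ m) {s : Multiset ℕ} (hs : Good m s) :
    ∀ y ∈ newparts m s, 0 < y := by
  intro y hy
  rcases Multiset.mem_add.mp hy with h | h
  · obtain ⟨x, hx, rfl⟩ := Multiset.mem_map.mp h
    exact ff_pos hm (hs x hx).1 (hs x hx).2
  · rw [Multiset.eq_of_mem_replicate h]
    omega

lemma cond_newparts {m : ℕ} (hm : 7 ≤ m) {s : Multiset ℕ} (hs : Good m s) :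
    ∀ y ∈ newparts m s, y % (m - 1) = 2 % (m - 1) ∨ (y + 2) % (m - 1) = 0 := by
  intro y hy
  rcases Multiset.mem_add.mp hy with h | h
  · obtain ⟨x, hx, rfl⟩ := Multiset.mem_map.mp h
    exact ff_cond hm (hs x hx).1 (hs x hx).2
  · rw [Multiset.eq_of_mem_replicate h]
    left; rfl

lemma Kv_newparts {m : ℕ} (hm : 7 ≤ m) {s : Multiset ℕ} (hs : Good m s) :
    Kv (m - 1) (newparts m s) = Kv m s := by
  rw [newparts, Kv, Multiset.map_add, Multiset.sum_add, Multiset.map_replicate,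
    kk'_two hm, Multiset.sum_replicate, Multiset.map_map]
  have h1 : s.map (kk (m - 1) ∘ ff m) = s.map (kk m) := by
    apply Multiset.map_congr rfl
    intro x hx
    exact kk'_ff hm (hs x hx).1 (hs x hx).2
  rw [h1, Kv]
  simp

lemma newparts_inj {m : ℕ} (hm : 7 ≤ m) {s t : Multiset ℕ}
    (hs : Good m s) (ht : Good m t) (h : newparts m s = newparts m t) : s = t := by
  have hK : Kv m s = Kv m t := by
    rw [← Kv_newparts hm hs, ← Kv_newparts hm ht, h]
  have h2 : s.map (ff m) = t.map (ff m) := by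
    have := h
    rw [newparts, newparts, hK] at this
    exact add_right_cancel this
  have h3 : (s.map (ff m)).map (gg m) = (t.map (ff m)).map (gg m) := by rw [h2]
  rw [Multiset.map_map, Multiset.map_map] at h3
  have h4 : ∀ u : Multiset ℕ, Good m u → u.map (gg m ∘ ff m) = u := by
    intro u hu
    have : u.map (gg m ∘ ff m) = u.map id := by
      apply Multiset.map_congr rfl
      intro x hx
      exact gg_ff hm (hu x hx).1 (hu x hx).2
    rw [this, Multiset.map_id]
  rwa [h4 s hs, h4 t ht] at h3

/-- The injection on subtypes of partitions. -/
lemma good_of {m N : ℕ}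
    (p : {p : N.Partition // ∀ x ∈ p.parts, x % m = 2 % m ∨ (x + 2) % m = 0}) :
    Good m p.1.parts := fun x hx => ⟨p.1.parts_pos hx, p.2 x hx⟩

noncomputable def toEven (m N : ℕ) (hm : 7 ≤ m) (hmo : m % 2 = 1) (hN : N % 2 = 1)
    (p : {p : N.Partition // ∀ x ∈ p.parts, x % m = 2 % m ∨ (x + 2) % m = 0}) :
    {p : (N + 1).Partition //
      ∀ x ∈ p.parts, x % (m - 1) = 2 % (m - 1) ∨ (x + 2) % (m - 1) = 0} :=
  ⟨⟨newparts m p.1.parts,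
    fun {i} hi => pos_newparts hm (good_of p) i hi,
    by rw [sum_newparts hm hmo (good_of p) (by rw [p.1.parts_sum]; exact hN),
        p.1.parts_sum]⟩,
   cond_newparts hm (good_of p)⟩

lemma toEven_inj (m N : ℕ) (hm : 7 ≤ m) (hmo : m % 2 = 1) (hN : N % 2 = 1) :
    Function.Injective (toEven m N hm hmo hN) := by
  intro p q h
  have h1 : newparts m p.1.parts = newparts m q.1.parts :=
    congrArg (fun r : {p : (N + 1).Partition //
      ∀ x ∈ p.parts, x % (m - 1) = 2 % (m - 1) ∨ (x + 2) % (m - 1) = 0} =>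
        r.1.parts) h
  exact Subtype.ext (Nat.Partition.ext
    (newparts_inj hm (good_of p) (good_of q) h1))

end QShiftAux

theorem Q_shift_odd_to_even (d n : ℕ) (hd : 4 ≤ d) (hde : Even d) (hn : 0 < n) :
    QNum 2 d (2 * n - 1) ≤ QNum 2 (d - 1) (2 * n) := by
  obtain ⟨t, ht⟩ := hde
  have e1 : d - 1 + 3 = (d + 3) - 1 := by omega
  simp only [QNum, e1]
  generalize hN : 2 * n - 1 = N
  rw [show 2 * n = N + 1 by omega]
  exact Nat.card_le_card_of_injective _
    (QShiftAux.toEven_inj (d + 3) N (by omega) (by omega) (by omega))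
end

section
/- Let a ≥ 3, let d ≥ a(2^{12} − 1), and set d′ = ⌈d/a⌉. Then for every positive integer n, Q_{ad′−a−3}^{(a)}(a⌈n/a⌉) ≥ Q_d^{(a)}(n). -/
private lemma multiset_map_injOn {f : ℕ → ℕ} {P : ℕ → Prop}
    (hf : ∀ x y, P x → P y → f x = f y → x = y) :
    ∀ s t : Multiset ℕ, (∀ x ∈ s, P x) → (∀ x ∈ t, P x) → s.map f = t.map f → s = t := by
  intro s
  induction s using Multiset.induction_on with
  | empty =>
    intro t _ _ h
    exact (Multiset.map_eq_zero.mp h.symm).symm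
  | cons c s ih =>
    intro t hs ht h
    have hmem : f c ∈ t.map f := by
      rw [← h]; simp
    obtain ⟨b, hb, hfb⟩ := Multiset.mem_map.mp hmem
    have hcb : c = b := hf c b (hs c (by simp)) (ht b hb) hfb.symm
    subst hcb
    have ht' : t = c ::ₘ t.erase c := (Multiset.cons_erase hb).symm
    rw [ht'] at h ⊢
    simp only [Multiset.map_cons] at h
    have h' : s.map f = (t.erase c).map f := (Multiset.cons_inj_right _).mp h
    rw [ih (t.erase c) (fun x hx => hs x (by simp [hx]))
      (fun x hx => ht x (Multiset.mem_of_mem_erase hx)) h']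

private lemma sum_map_le {f : ℕ → ℕ} :
    ∀ s : Multiset ℕ, (∀ x ∈ s, f x ≤ x) → (s.map f).sum ≤ s.sum := by
  intro s
  induction s using Multiset.induction_on with
  | empty => simp
  | cons c s ih =>
    intro h
    simp only [Multiset.map_cons, Multiset.sum_cons]
    exact Nat.add_le_add (h c (by simp)) (ih fun x hx => h x (by simp [hx]))

private lemma aux_card_le (a D M N n : ℕ) (ha : 3 ≤ a) (hMD : M + 1 ≤ D)
    (h2aM : 2 * a + 1 ≤ M) (haM : a ∣ M) (h2aD : 2 * a + 1 ≤ D)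
    (hnN : n ≤ N) (haN : a ∣ N) :
    Nat.card {p : n.Partition //
      ∀ x ∈ p.parts, x % D = a % D ∨ (x + a) % D = 0} ≤
    Nat.card {q : N.Partition //
      ∀ x ∈ q.parts, x % M = a % M ∨ (x + a) % M = 0} := by
  have ha0 : 0 < a := by omega
  have haDlt : a < D := by omega
  have haD : a % D = a := Nat.mod_eq_of_lt haDlt
  -- the map on parts
  set f : ℕ → ℕ := fun x => if x % D = a % D then x / D * M + a else (x + a) / D * M - a
    with hf
  have hfa : f a = a := by
    simp only [hf, if_pos rfl, Nat.div_eq_of_lt haDlt, Nat.zero_mul, Nat.zero_add]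
  -- basic facts about f on valid parts
  have key : ∀ x, 0 < x → (x % D = a % D ∨ (x + a) % D = 0) →
      0 < f x ∧ f x ≤ x ∧ a ∣ f x ∧ (f x % M = a % M ∨ (f x + a) % M = 0) := by
    intro x hx hval
    by_cases h : x % D = a % D
    · have hfx : f x = x / D * M + a := by simp only [hf, if_pos h]
      have hdm := Nat.div_add_mod x D
      have hxe : x = D * (x / D) + a := by omega
      refine ⟨by omega, ?_, ?_, Or.inl ?_⟩
      · have h1 : x / D * M ≤ x / D * D := Nat.mul_le_mul_left _ (by omega)
        have h2 : x / D * D = D * (x / D) := Nat.mul_comm _ _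
        omega
      · rw [hfx]; exact Dvd.dvd.add (haM.mul_left _) dvd_rfl
      · rw [hfx, Nat.add_comm, Nat.add_mul_mod_self_right]
    · have h0 : (x + a) % D = 0 := hval.resolve_left h
      have hdm := Nat.div_add_mod (x + a) D
      have hfx : f x = (x + a) / D * M - a := by simp only [hf, if_neg h]
      set k := (x + a) / D with hk
      have hxe : x + a = D * k := by omega
      have hk1 : 1 ≤ k := by
        rcases Nat.eq_zero_or_pos k with h' | h'
        · rw [h', Nat.mul_zero] at hxe; omega
        · exact h'
      have hkM : M ≤ k * M := Nat.le_mul_of_pos_left _ hk1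
      have hkMD : k * M ≤ k * D := Nat.mul_le_mul_left _ (by omega)
      have hkD : k * D = D * k := Nat.mul_comm _ _
      refine ⟨by omega, by omega, ?_, Or.inr ?_⟩
      · rw [hfx]; exact Nat.dvd_sub (haM.mul_left _) dvd_rfl
      · rw [hfx, Nat.sub_add_cancel (by omega), Nat.mul_mod_left]
  -- injectivity of f on valid parts
  have finj : ∀ x y, (0 < x ∧ (x % D = a % D ∨ (x + a) % D = 0)) →
      (0 < y ∧ (y % D = a % D ∨ (y + a) % D = 0)) → f x = f y → x = y := by
    intro x y ⟨hx, hvx⟩ ⟨hy, hvy⟩ hfeq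
    have hM0 : 0 < M := by omega
    simp only [hf] at hfeq
    by_cases h1 : x % D = a % D
    · rw [if_pos h1] at hfeq
      have hdmx := Nat.div_add_mod x D
      have hxe : x = D * (x / D) + a := by omega
      by_cases h2 : y % D = a % D
      · rw [if_pos h2] at hfeq
        have hdmy := Nat.div_add_mod y D
        have hye : y = D * (y / D) + a := by omega
        have : x / D = y / D := Nat.eq_of_mul_eq_mul_right hM0 (by omega)
        rw [hxe, hye, this]
      · -- x plus, y minus : impossible
        rw [if_neg h2] at hfeq
        have h0 : (y + a) % D = 0 := hvy.resolve_left h2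
        have hdmy := Nat.div_add_mod (y + a) D
        set ky := (y + a) / D with hky
        have hye : y + a = D * ky := by omega
        have hky1 : 1 ≤ ky := by
          rcases Nat.eq_zero_or_pos ky with h' | h'
          · rw [h', Nat.mul_zero] at hye; omega
          · exact h'
        have hkM : M ≤ ky * M := Nat.le_mul_of_pos_left _ hky1
        have heq : x / D * M + 2 * a = ky * M := by omega
        exfalso
        rcases Nat.lt_or_ge (x / D) ky with hlt | hge
        · have h3 : (x / D + 1) * M ≤ ky * M := Nat.mul_le_mul_right _ (by omega)
          have h4 : (x / D + 1) * M = x / D * M + M := by ring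
          omega
        · have h3 : ky * M ≤ x / D * M := Nat.mul_le_mul_right _ hge
          omega
    · rw [if_neg h1] at hfeq
      have h0x : (x + a) % D = 0 := hvx.resolve_left h1
      have hdmx := Nat.div_add_mod (x + a) D
      set kx := (x + a) / D with hkx
      have hxe : x + a = D * kx := by omega
      have hkx1 : 1 ≤ kx := by
        rcases Nat.eq_zero_or_pos kx with h' | h'
        · rw [h', Nat.mul_zero] at hxe; omega
        · exact h'
      have hkxM : M ≤ kx * M := Nat.le_mul_of_pos_left _ hkx1
      by_cases h2 : y % D = a % D
      · -- x minus, y plus : impossible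
        rw [if_pos h2] at hfeq
        have hdmy := Nat.div_add_mod y D
        have hye : y = D * (y / D) + a := by omega
        have heq : y / D * M + 2 * a = kx * M := by omega
        exfalso
        rcases Nat.lt_or_ge (y / D) kx with hlt | hge
        · have h3 : (y / D + 1) * M ≤ kx * M := Nat.mul_le_mul_right _ (by omega)
          have h4 : (y / D + 1) * M = y / D * M + M := by ring
          omega
        · have h3 : kx * M ≤ y / D * M := Nat.mul_le_mul_right _ hge
          omega
      · rw [if_neg h2] at hfeq
        have h0y : (y + a) % D = 0 := hvy.resolve_left h2
        have hdmy := Nat.div_add_mod (y + a) D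
        set ky := (y + a) / D with hky
        have hye : y + a = D * ky := by omega
        have hky1 : 1 ≤ ky := by
          rcases Nat.eq_zero_or_pos ky with h' | h'
          · rw [h', Nat.mul_zero] at hye; omega
          · exact h'
        have hkyM : M ≤ ky * M := Nat.le_mul_of_pos_left _ hky1
        have : kx = ky := Nat.eq_of_mul_eq_mul_right hM0 (by omega)
        rw [this] at hxe
        omega
  -- cancellation helper
  have cancel : ∀ (P₁ P₂ : Multiset ℕ) (t₁ t₂ : ℕ),
      (∀ x ∈ P₁, 0 < x ∧ (x % D = a % D ∨ (x + a) % D = 0)) →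
      (∀ x ∈ P₂, 0 < x ∧ (x % D = a % D ∨ (x + a) % D = 0)) →
      P₁.sum = n → P₂.sum = n → t₁ ≤ t₂ →
      P₁.map f + Multiset.replicate t₁ a = P₂.map f + Multiset.replicate t₂ a →
      P₁ = P₂ := by
    intro P₁ P₂ t₁ t₂ h₁ h₂ hs₁ hs₂ hle heq
    have hrep : Multiset.replicate t₂ a
        = Multiset.replicate (t₂ - t₁) a + Multiset.replicate t₁ a := by
      rw [← Multiset.replicate_add]; congr 1; omega
    rw [hrep, ← add_assoc] at heq
    have heq2 : P₁.map f = (P₂ + Multiset.replicate (t₂ - t₁) a).map f := by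
      have h' : P₁.map f = P₂.map f + Multiset.replicate (t₂ - t₁) a :=
        add_right_cancel heq
      rw [h', Multiset.map_add, Multiset.map_replicate, hfa]
    have hP : P₁ = P₂ + Multiset.replicate (t₂ - t₁) a := by
      refine multiset_map_injOn finj _ _ (fun x hx => ⟨(h₁ x hx).1, (h₁ x hx).2⟩) ?_ heq2
      intro x hx
      rcases Multiset.mem_add.mp hx with hx' | hx'
      · exact h₂ x hx'
      · have hxa := Multiset.eq_of_mem_replicate hx'
        subst hxa
        exact ⟨by omega, Or.inl rfl⟩
    have hsum := congrArg Multiset.sum hP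
    rw [hs₁, Multiset.sum_add, hs₂, Multiset.sum_replicate, smul_eq_mul] at hsum
    have ht0 : (t₂ - t₁) * a = 0 := by omega
    have ht0' : t₂ - t₁ = 0 := by
      rcases Nat.mul_eq_zero.mp ht0 with h' | h'
      · exact h'
      · omega
    rw [ht0', Multiset.replicate_zero, add_zero] at hP
    exact hP
  -- facts about the image of a valid partition
  have himg : ∀ (p : n.Partition),
      (∀ x ∈ p.parts, x % D = a % D ∨ (x + a) % D = 0) →
      (p.parts.map f).sum ≤ N ∧ a ∣ (N - (p.parts.map f).sum) := by
    intro p hp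
    have h1 : (p.parts.map f).sum ≤ p.parts.sum :=
      sum_map_le _ (fun x hx => (key x (p.parts_pos hx) (hp x hx)).2.1)
    have h2 : (p.parts.map f).sum ≤ N := by
      rw [p.parts_sum] at h1; omega
    have h3 : a ∣ (p.parts.map f).sum := by
      refine Multiset.dvd_sum ?_
      intro y hy
      obtain ⟨x, hx, rfl⟩ := Multiset.mem_map.mp hy
      exact (key x (p.parts_pos hx) (hp x hx)).2.2.1
    exact ⟨h2, Nat.dvd_sub haN h3⟩
  have hpos : ∀ (p : n.Partition)
      (hp : ∀ x ∈ p.parts, x % D = a % D ∨ (x + a) % D = 0),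
      ∀ {i : ℕ}, i ∈ p.parts.map f
        + Multiset.replicate ((N - (p.parts.map f).sum) / a) a → 0 < i := by
    intro p hp i hi
    rcases Multiset.mem_add.mp hi with hi' | hi'
    · obtain ⟨x, hx, rfl⟩ := Multiset.mem_map.mp hi'
      exact (key x (p.parts_pos hx) (hp x hx)).1
    · have := Multiset.eq_of_mem_replicate hi'
      omega
  have hsumN : ∀ (p : n.Partition)
      (hp : ∀ x ∈ p.parts, x % D = a % D ∨ (x + a) % D = 0),
      (p.parts.map f + Multiset.replicate ((N - (p.parts.map f).sum) / a) a).sum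
        = N := by
    intro p hp
    obtain ⟨h2, h4⟩ := himg p hp
    rw [Multiset.sum_add, Multiset.sum_replicate, smul_eq_mul,
      Nat.div_mul_cancel h4]
    omega
  have hcond : ∀ (p : n.Partition)
      (hp : ∀ x ∈ p.parts, x % D = a % D ∨ (x + a) % D = 0),
      ∀ x ∈ p.parts.map f
        + Multiset.replicate ((N - (p.parts.map f).sum) / a) a,
        x % M = a % M ∨ (x + a) % M = 0 := by
    intro p hp x hx
    rcases Multiset.mem_add.mp hx with hx' | hx'
    · obtain ⟨y, hy, rfl⟩ := Multiset.mem_map.mp hx'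
      exact (key y (p.parts_pos hy) (hp y hy)).2.2.2
    · have hxa := Multiset.eq_of_mem_replicate hx'
      subst hxa
      exact Or.inl rfl
  -- the injection
  have inj : Function.Injective
      (fun p : {p : n.Partition //
          ∀ x ∈ p.parts, x % D = a % D ∨ (x + a) % D = 0} =>
        (⟨⟨p.1.parts.map f
            + Multiset.replicate ((N - (p.1.parts.map f).sum) / a) a,
          hpos p.1 p.2, hsumN p.1 p.2⟩, hcond p.1 p.2⟩ :
          {q : N.Partition //
            ∀ x ∈ q.parts, x % M = a % M ∨ (x + a) % M = 0})) := by
    intro p₁ p₂ h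
    have h1 : p₁.1.parts.map f
        + Multiset.replicate ((N - (p₁.1.parts.map f).sum) / a) a
        = p₂.1.parts.map f
        + Multiset.replicate ((N - (p₂.1.parts.map f).sum) / a) a :=
      congrArg (fun q => q.1.parts) h
    have hv₁ : ∀ x ∈ p₁.1.parts, 0 < x ∧ (x % D = a % D ∨ (x + a) % D = 0) :=
      fun x hx => ⟨p₁.1.parts_pos hx, p₁.2 x hx⟩
    have hv₂ : ∀ x ∈ p₂.1.parts, 0 < x ∧ (x % D = a % D ∨ (x + a) % D = 0) :=
      fun x hx => ⟨p₂.1.parts_pos hx, p₂.2 x hx⟩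
    have hparts : p₁.1.parts = p₂.1.parts := by
      rcases le_total ((N - (p₁.1.parts.map f).sum) / a)
          ((N - (p₂.1.parts.map f).sum) / a) with hle | hle
      · exact cancel _ _ _ _ hv₁ hv₂ p₁.1.parts_sum p₂.1.parts_sum hle h1
      · exact (cancel _ _ _ _ hv₂ hv₁ p₂.1.parts_sum p₁.1.parts_sum hle h1.symm).symm
    exact Subtype.ext (Nat.Partition.ext hparts)
  exact Nat.card_le_card_of_injective _ inj


theorem Q_level_a_shift (a d n : ℕ) (ha : 3 ≤ a) (hd : a * (2 ^ 12 - 1) ≤ d)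
    (hn : 0 < n) :
    QNum a d n ≤ QNum a (a * ((d + a - 1) / a) - a - 3) (a * ((n + a - 1) / a)) := by
  have ha0 : 0 < a := by omega
  have h4095 : a * (2 ^ 12 - 1) = a * 4095 := by norm_num
  rw [h4095] at hd
  have hq := Nat.div_add_mod (d + a - 1) a
  have hr : (d + a - 1) % a < a := Nat.mod_lt _ ha0
  have hdp : 4095 ≤ (d + a - 1) / a := by
    by_contra hcon
    push_neg at hcon
    have hcon2 : a * ((d + a - 1) / a) ≤ a * 4094 := Nat.mul_le_mul_left _ (by omega)
    omega
  have hX : a * 4095 ≤ a * ((d + a - 1) / a) := Nat.mul_le_mul_left _ hdp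
  have hqn := Nat.div_add_mod (n + a - 1) a
  have hrn : (n + a - 1) % a < a := Nat.mod_lt _ ha0
  have hmod : a * ((d + a - 1) / a) - a - 3 + 3 = a * ((d + a - 1) / a) - a := by
    omega
  simp only [QNum]
  rw [hmod]
  refine aux_card_le a (d + 3) (a * ((d + a - 1) / a) - a) (a * ((n + a - 1) / a)) n
    ha (by omega) (by omega) (Nat.dvd_sub (dvd_mul_right a _) dvd_rfl) (by omega)
    (by omega) (dvd_mul_right a _)
end
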